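/- arXiv:2107.06611 — 4 statements merged into one kernel-verified Lean document; each statement's English description precedes it below -/
import Mathlib

section
/- Let n ≥ 2 and let Ω ⊂ ℝⁿ be an open ball (a bounded open Lipschitz domain). Let s, p, K : ℝⁿ×ℝⁿ → ℝ be symmetric measurable functions satisfying the standing bounds, and assume in addition that either p⁺ − 1 < n p⁻/(n − s⁻p⁻) or s⁻p⁻ ≥ n. If g ∈ 𝕎^{s(·,·),p(·,·)}(Ω) ∩ L^∞(Ω; L^{p(·,·)−1}_{s(·,·)p(·,·)}(ℝⁿ)), then the unique minimizer u ∈ 𝕎^{s(·,·),p(·,·)}(Ω), with u = g a.e. in ℝⁿ\Ω, of the energy ℰ(v;Ω) := ∬_{𝒞_Ω} (1/p(x,y)) |v(x)−v(y)|^{p(x,y)} K(x,y) dy dx also belongs to L^∞(Ω; L^{p(·,·)−1}_{s(·,·)p(·,·)}(ℝⁿ)). -/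
open MeasureTheory Metric Set Real
open scoped ENNReal NNReal

noncomputable section

abbrev Rn (n : ℕ) := EuclideanSpace ℝ (Fin n)

/-- The variable-power modular `ρ_{s,p}(v;U)` (valued in `ℝ≥0∞`). -/
def modular (n : ℕ) (s p : Rn n → Rn n → ℝ) (v : Rn n → ℝ) (U : Set (Rn n)) : ℝ≥0∞ :=
  ∫⁻ x in U, ∫⁻ y in U,
    ENNReal.ofReal (|v x - v y| ^ p x y / ‖x - y‖ ^ ((n : ℝ) + s x y * p x y))

/-- The cross set `𝒞_Ω = (ℝⁿ×ℝⁿ) \ (Ωᶜ×Ωᶜ)`. -/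
def crossSet (n : ℕ) (Ω : Set (Rn n)) : Set (Rn n × Rn n) :=
  Set.univ \ (Ωᶜ ×ˢ Ωᶜ)

/-- The modular over the cross set `𝒞_Ω`. -/
def crossModular (n : ℕ) (Ω : Set (Rn n)) (s p : Rn n → Rn n → ℝ) (v : Rn n → ℝ) : ℝ≥0∞ :=
  ∫⁻ z in crossSet n Ω,
    ENNReal.ofReal (|v z.1 - v z.2| ^ p z.1 z.2 / ‖z.1 - z.2‖ ^ ((n : ℝ) + s z.1 z.2 * p z.1 z.2))

/-- Infimum of a two-variable function over `U × U`. -/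
def infOn (n : ℕ) (p : Rn n → Rn n → ℝ) (U : Set (Rn n)) : ℝ := sInf (Set.image2 p U U)

/-- Supremum of a two-variable function over `U × U`. -/
def supOn (n : ℕ) (p : Rn n → Rn n → ℝ) (U : Set (Rn n)) : ℝ := sSup (Set.image2 p U U)

/-- Membership in `𝕎^{s(·,·),p(·,·)}(Ω)`. -/
def MemW (n : ℕ) (Ω : Set (Rn n)) (s p : Rn n → Rn n → ℝ) (v : Rn n → ℝ) : Prop :=
  Measurable v ∧
  (∫⁻ x in Ω, ENNReal.ofReal (|v x| ^ infOn n p Ω)) < ⊤ ∧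
  crossModular n Ω s p v < ⊤

/-- The tail seminorm `[v]_{L^∞(U;L^{p-1}_{sp}(ℝⁿ))}`. -/
def tailSemi (n : ℕ) (s p : Rn n → Rn n → ℝ) (v : Rn n → ℝ) (U : Set (Rn n)) : ℝ≥0∞ :=
  essSup (fun x => ∫⁻ y,
    ENNReal.ofReal (|v y| ^ (p x y - 1) / (1 + ‖y‖) ^ ((n : ℝ) + s x y * p x y)))
    (volume.restrict U)

/-- Membership in the tail space `L^∞(Ω;L^{p(·,·)-1}_{s(·,·)p(·,·)}(ℝⁿ))`. -/
def MemTail (n : ℕ) (Ω : Set (Rn n)) (s p : Rn n → Rn n → ℝ) (v : Rn n → ℝ) : Prop :=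
  Measurable v ∧ tailSemi n s p v Ω < ⊤

/-- The nonlocal tail `T(v;x₀,r,ρ)`. -/
def tailT (n : ℕ) (s p : Rn n → Rn n → ℝ) (v : Rn n → ℝ) (x₀ : Rn n) (r ρ : ℝ) : ℝ≥0∞ :=
  ⨆ x ∈ ball x₀ ρ, ∫⁻ y in (ball x₀ r)ᶜ,
    ENNReal.ofReal (|v y| ^ (p x y - 1) / ‖y - x₀‖ ^ ((n : ℝ) + s x y * p x y))

/-- `u` is a weak solution of `𝓛_K u = 0` in `Ω`. -/
def IsWeakSol (n : ℕ) (Ω : Set (Rn n)) (s p K : Rn n → Rn n → ℝ) (u : Rn n → ℝ) : Prop :=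
  MemW n Ω s p u ∧
  ∀ φ : Rn n → ℝ, MemW n Ω s p φ → (∀ᵐ x ∂(volume.restrict Ωᶜ), φ x = 0) →
    (∫ z in crossSet n Ω,
      |u z.1 - u z.2| ^ (p z.1 z.2 - 2) * (u z.1 - u z.2) * (φ z.1 - φ z.2) * K z.1 z.2) = 0

/-- The oscillation `ω_p(r)` of `p` near the diagonal of `Ω`. -/
def oscDiag (n : ℕ) (Ω : Set (Rn n)) (p : Rn n → Rn n → ℝ) (r : ℝ) : ℝ :=
  sSup { d | ∃ z x₁ x₂ y₁ y₂ : Rn n, ball z r ⊆ Ω ∧ x₁ ∈ ball z r ∧ x₂ ∈ ball z r ∧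
    y₁ ∈ ball z r ∧ y₂ ∈ ball z r ∧ d = |p x₁ y₁ - p x₂ y₂| }

/-- Standing assumptions on the variable powers `s` and `p`. -/
structure StandingSP (n : ℕ) (s p : Rn n → Rn n → ℝ) (sm sp pm pp : ℝ) : Prop where
  s_symm : ∀ x y, s x y = s y x
  p_symm : ∀ x y, p x y = p y x
  s_meas : Measurable fun z : Rn n × Rn n => s z.1 z.2
  p_meas : Measurable fun z : Rn n × Rn n => p z.1 z.2
  sm_pos : 0 < sm
  sp_lt_one : sp < 1
  s_bounds : ∀ x y, sm ≤ s x y ∧ s x y ≤ sp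
  pm_gt_one : 1 < pm
  p_bounds : ∀ x y, pm ≤ p x y ∧ p x y ≤ pp

/-- Standing assumptions on the kernel `K`. -/
structure StandingKernel (n : ℕ) (s p K : Rn n → Rn n → ℝ) (Λ : ℝ) : Prop where
  K_symm : ∀ x y, K x y = K y x
  K_meas : Measurable fun z : Rn n × Rn n => K z.1 z.2
  lam_gt_one : 1 < Λ
  K_bounds : ∀ᵐ z ∂(volume : Measure (Rn n × Rn n)),
    Λ⁻¹ / ‖z.1 - z.2‖ ^ ((n : ℝ) + s z.1 z.2 * p z.1 z.2) ≤ K z.1 z.2 ∧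
    K z.1 z.2 ≤ Λ / ‖z.1 - z.2‖ ^ ((n : ℝ) + s z.1 z.2 * p z.1 z.2)

/-- The energy `ℰ(v;Ω)`. -/
def energyE (n : ℕ) (Ω : Set (Rn n)) (p K : Rn n → Rn n → ℝ) (v : Rn n → ℝ) : ℝ≥0∞ :=
  ∫⁻ z in crossSet n Ω,
    ENNReal.ofReal ((1 / p z.1 z.2) * |v z.1 - v z.2| ^ p z.1 z.2 * K z.1 z.2)

/-- `u` minimizes the energy among competitors agreeing with `g` a.e. outside `Ω`. -/
def IsMinimizer (n : ℕ) (Ω : Set (Rn n)) (s p K : Rn n → Rn n → ℝ) (g u : Rn n → ℝ) : Prop :=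
  MemW n Ω s p u ∧ (∀ᵐ x ∂(volume.restrict Ωᶜ), u x = g x) ∧
  ∀ v : Rn n → ℝ, MemW n Ω s p v → (∀ᵐ x ∂(volume.restrict Ωᶜ), v x = g x) →
    energyE n Ω p K u ≤ energyE n Ω p K v



/-! ### Auxiliary lemmas -/

private lemma decay_rec_aux (a : ℕ → ℝ) (C0 q β α : ℝ) (K : ℕ)
    (ha : ∀ k, 0 ≤ a k) (hC0 : 0 ≤ C0) (hβ0 : 0 ≤ β) (hβ1 : β < 1)
    (hγ : α * (1 - β) ≤ q)
    (hrec : ∀ k, K ≤ k → a (k + 1) ≤ C0 * (2:ℝ) ^ (-(k : ℝ) * q) * a k ^ β) :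
    ∃ M : ℝ, 1 ≤ M ∧ ∀ k, K ≤ k → a k ≤ M * (2:ℝ) ^ (-α * (k : ℝ)) := by
  have h1β : (0:ℝ) < 1 - β := by linarith
  set M : ℝ := max ((C0 * (2:ℝ) ^ α) ^ (1 - β)⁻¹) (max 1 (a K * (2:ℝ) ^ (α * (K : ℝ)))) with hM
  have hM1 : (1:ℝ) ≤ M := le_trans (le_max_left _ _) (le_max_right _ _)
  have hMpos : (0:ℝ) < M := lt_of_lt_of_le one_pos hM1
  have hM2 : C0 * (2:ℝ) ^ α ≤ M ^ (1 - β) := by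
    have h0 : (0:ℝ) ≤ C0 * (2:ℝ) ^ α := mul_nonneg hC0 (Real.rpow_nonneg (by norm_num) _)
    have h3 : ((C0 * (2:ℝ) ^ α) ^ (1 - β)⁻¹) ^ (1 - β) ≤ M ^ (1 - β) :=
      Real.rpow_le_rpow (Real.rpow_nonneg h0 _) (le_max_left _ _) (le_of_lt h1β)
    rwa [← Real.rpow_mul h0, inv_mul_cancel₀ (ne_of_gt h1β), Real.rpow_one] at h3
  refine ⟨M, hM1, fun k hk => ?_⟩
  induction k, hk using Nat.le_induction with
  | base =>
      have h2 : (0:ℝ) < (2:ℝ) ^ (-α * (K : ℝ)) := Real.rpow_pos_of_pos two_pos _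
      have h4 : a K = (a K * (2:ℝ) ^ (α * (K : ℝ))) * (2:ℝ) ^ (-α * (K : ℝ)) := by
        rw [mul_assoc, ← Real.rpow_add two_pos]
        norm_num
      rw [h4]
      exact mul_le_mul_of_nonneg_right (le_trans (le_max_right _ _) (le_max_right _ _)) (le_of_lt h2)
  | succ k hk ih =>
      have step := hrec k hk
      have h2k : (0:ℝ) ≤ (2:ℝ) ^ (-(k:ℝ) * q) := Real.rpow_nonneg (by norm_num) _
      have hMk : a k ^ β ≤ (M * (2:ℝ) ^ (-α * (k:ℝ))) ^ β :=
        Real.rpow_le_rpow (ha k) ih hβ0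
      have chain : a (k+1) ≤ C0 * (2:ℝ) ^ (-(k:ℝ) * q) * (M * (2:ℝ) ^ (-α * (k:ℝ))) ^ β := by
        calc a (k+1) ≤ C0 * (2:ℝ) ^ (-(k:ℝ) * q) * a k ^ β := step
        _ ≤ _ := mul_le_mul_of_nonneg_left hMk (mul_nonneg hC0 h2k)
      have expand : C0 * (2:ℝ) ^ (-(k:ℝ) * q) * (M * (2:ℝ) ^ (-α * (k:ℝ))) ^ β
          = (C0 * M ^ β) * (2:ℝ) ^ (-(k:ℝ) * q + (-α * (k:ℝ)) * β) := by
        rw [Real.mul_rpow (le_of_lt hMpos) (Real.rpow_nonneg (by norm_num) _),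
          ← Real.rpow_mul (by norm_num : (0:ℝ) ≤ 2), Real.rpow_add two_pos]
        ring
      have key : C0 * M ^ β ≤ M * (2:ℝ) ^ (-α) := by
        calc C0 * M ^ β = (C0 * (2:ℝ) ^ α) * (2:ℝ) ^ (-α) * M ^ β := by
              rw [mul_assoc C0, ← Real.rpow_add two_pos]; norm_num
        _ ≤ M ^ (1 - β) * (2:ℝ) ^ (-α) * M ^ β :=
            mul_le_mul_of_nonneg_right (mul_le_mul_of_nonneg_right hM2
              (Real.rpow_nonneg (by norm_num) _)) (Real.rpow_nonneg (le_of_lt hMpos) _)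
        _ = M * (2:ℝ) ^ (-α) := by
            rw [mul_right_comm, ← Real.rpow_add hMpos]
            norm_num
      have expo : (2:ℝ) ^ (-α) * (2:ℝ) ^ (-(k:ℝ) * q + (-α * (k:ℝ)) * β)
          ≤ (2:ℝ) ^ (-α * ((k:ℝ)+1)) := by
        rw [← Real.rpow_add two_pos]
        apply Real.rpow_le_rpow_of_exponent_le one_le_two
        have h5 : α * (1 - β) * (k:ℝ) ≤ q * (k:ℝ) :=
          mul_le_mul_of_nonneg_right hγ (by positivity : (0:ℝ) ≤ (k:ℝ))
        nlinarith [(by positivity : (0:ℝ) ≤ (k:ℝ))]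
      have final : a (k+1) ≤ M * (2:ℝ) ^ (-α * ((k:ℝ)+1)) := by
        calc a (k+1) ≤ (C0 * M ^ β) * (2:ℝ) ^ (-(k:ℝ) * q + (-α * (k:ℝ)) * β) := by
              rw [← expand]; exact chain
        _ ≤ (M * (2:ℝ) ^ (-α)) * (2:ℝ) ^ (-(k:ℝ) * q + (-α * (k:ℝ)) * β) :=
            mul_le_mul_of_nonneg_right key (Real.rpow_nonneg (by norm_num) _)
        _ = M * ((2:ℝ) ^ (-α) * (2:ℝ) ^ (-(k:ℝ) * q + (-α * (k:ℝ)) * β)) := by ring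
        _ ≤ M * (2:ℝ) ^ (-α * ((k:ℝ)+1)) := mul_le_mul_of_nonneg_left expo (le_of_lt hMpos)
      have hcast : ((k+1 : ℕ) : ℝ) = (k:ℝ) + 1 := by push_cast; ring
      rw [hcast]
      exact final

private lemma geom_ball_aux (n : ℕ) (hn : 0 < n) (z₀ : Rn n) (R : ℝ) (hR : 0 < R) (x : Rn n)
    (hx : x ∈ ball z₀ R) (ρ : ℝ) (hρ : 0 < ρ) (hρR : ρ ≤ R) :
    ENNReal.ofReal ((ρ/2) ^ n) * volume (ball (0 : Rn n) 1)
      ≤ volume (ball z₀ R ∩ ball x ρ) := by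
  haveI : Nontrivial (Rn n) := ⟨0, EuclideanSpace.single ⟨0, hn⟩ 1, by
    intro h
    have := congrArg (fun v : Rn n => v ⟨0, hn⟩) h.symm
    simp [EuclideanSpace.single_apply] at this⟩
  obtain ⟨x', hx'⟩ : ∃ x' : Rn n, ball x' (ρ/2) ⊆ ball z₀ R ∩ ball x ρ := by
    rcases lt_or_ge (dist x z₀) (ρ/2) with hcase | hcase
    · refine ⟨z₀, fun w hw => ⟨?_, ?_⟩⟩
      · exact mem_ball.mpr (lt_of_lt_of_le (mem_ball.mp hw) (by linarith))
      · have h6 : dist w x ≤ dist w z₀ + dist z₀ x := dist_triangle _ _ _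
        rw [mem_ball] at hw ⊢
        rw [dist_comm z₀ x] at h6
        linarith
    · set d := dist x z₀ with hd
      have hdpos : 0 < d := lt_of_lt_of_le (by linarith) hcase
      set c : ℝ := ρ/(2*d) with hc
      have hc0 : 0 ≤ c := by positivity
      have hc1 : c ≤ 1 := by
        rw [hc, div_le_one (by positivity)]; linarith
      refine ⟨x + c • (z₀ - x), fun w hw => ?_⟩
      have hdx : dist (x + c • (z₀ - x)) x = ρ/2 := by
        rw [dist_eq_norm, add_sub_cancel_left, norm_smul, Real.norm_of_nonneg hc0,
          ← dist_eq_norm, dist_comm z₀ x, ← hd, hc]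
        field_simp
      have hdz : dist (x + c • (z₀ - x)) z₀ = d - ρ/2 := by
        have h7 : x + c • (z₀ - x) - z₀ = (1 - c) • (x - z₀) := by
          rw [sub_smul, one_smul, smul_sub]
          module
        rw [dist_eq_norm, h7, norm_smul, Real.norm_of_nonneg (by linarith),
          ← dist_eq_norm, ← hd, hc]
        field_simp
      rw [mem_ball] at hw
      constructor
      · rw [mem_ball]
        calc dist w z₀ ≤ dist w (x + c • (z₀ - x)) + dist (x + c • (z₀ - x)) z₀ :=
              dist_triangle _ _ _
        _ < ρ/2 + (d - ρ/2) := by rw [hdz]; linarith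
        _ = d := by ring
        _ < R := hx
      · rw [mem_ball]
        calc dist w x ≤ dist w (x + c • (z₀ - x)) + dist (x + c • (z₀ - x)) x :=
              dist_triangle _ _ _
        _ < ρ/2 + ρ/2 := by rw [hdx]; linarith
        _ = ρ := by ring
  calc ENNReal.ofReal ((ρ/2) ^ n) * volume (ball (0 : Rn n) 1)
      = volume (ball x' (ρ/2)) := by
        rw [Measure.addHaar_ball volume x' (by positivity : (0:ℝ) ≤ ρ/2),
          finrank_euclideanSpace_fin]
  _ ≤ _ := measure_mono hx'

set_option maxHeartbeats 2000000 in
/-- **Tail-space membership of the minimizer** (Theorem `thmexistence`, second part), for `Ω` an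
open ball. If `p⁺ − 1 < n p⁻/(n − s⁻p⁻)` or `s⁻p⁻ ≥ n`, and the boundary datum `g` belongs to
`𝕎^{s,p}(Ω) ∩ L^∞(Ω;L^{p-1}_{sp}(ℝⁿ))`, then any minimizer `u` of the energy with `u = g` a.e.
in `ℝⁿ \ Ω` belongs to the tail space `L^∞(Ω;L^{p(·,·)−1}_{s(·,·)p(·,·)}(ℝⁿ))`. -/
theorem minimizer_mem_tail
    (n : ℕ) (hn : 2 ≤ n) (z₀ : Rn n) (R : ℝ) (hR : 0 < R)
    (s p K : Rn n → Rn n → ℝ) (sm sps pm pp Λ : ℝ)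
    (hsp : StandingSP n s p sm sps pm pp) (hK : StandingKernel n s p K Λ)
    (hexp : pp - 1 < n * pm / (n - sm * pm) ∨ (n : ℝ) ≤ sm * pm)
    (g : Rn n → ℝ) (hgW : MemW n (ball z₀ R) s p g)
    (hgT : MemTail n (ball z₀ R) s p g)
    (u : Rn n → ℝ) (hu : IsMinimizer n (ball z₀ R) s p K g u) :
    MemTail n (ball z₀ R) s p u := by
  classical
  obtain ⟨⟨humeas, _huLq, huMod⟩, hug, _hmin⟩ := hu
  refine ⟨humeas, ?_⟩
  -- basic constants
  have hn0 : (0:ℝ) < (n:ℝ) := by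
    have : (0:ℕ) < n := by omega
    exact_mod_cast this
  have hnne : n ≠ 0 := by omega
  have hpm1 : (1:ℝ) < pm := hsp.pm_gt_one
  have hsm0 : (0:ℝ) < sm := hsp.sm_pos
  have hpm0 : (0:ℝ) < pm := by linarith
  have hpmpp : pm ≤ pp := le_trans (hsp.p_bounds z₀ z₀).1 (hsp.p_bounds z₀ z₀).2
  set r : ℝ := pp - 1 with hrdef
  have hr0 : 0 < r := by rw [hrdef]; linarith
  set ε0 : ℝ := min (1/2) (pm/(2*r)) with hε0def
  have hε0 : 0 < ε0 := lt_min (by norm_num) (by positivity)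
  have hε0le : ε0 ≤ 1/2 := min_le_left _ _
  set t : ℝ := min sm ((n*(1-ε0))/pm) with htdef
  have ht0 : 0 < t := by
    apply lt_min hsm0
    apply div_pos (mul_pos hn0 (by linarith)) hpm0
  have htsm : t ≤ sm := min_le_left _ _
  have htpmn : t * pm < n := by
    have h1 : t ≤ n*(1-ε0)/pm := min_le_right _ _
    have h2 : t * pm ≤ n*(1-ε0) := by
      rw [← le_div_iff₀ hpm0]
      exact h1
    have h3 : (n:ℝ)*(1-ε0) < (n:ℝ)*1 := by
      apply mul_lt_mul_of_pos_left _ hn0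
      linarith
    linarith
  have hntpm : (0:ℝ) < (n:ℝ) - t*pm := by linarith
  set qstar : ℝ := (n:ℝ)*pm/((n:ℝ) - t*pm) with hqstardef
  have hrq : r < qstar := by
    rcases le_total sm ((n:ℝ)*(1-ε0)/pm) with hcase | hcase
    · have hteq : t = sm := min_eq_left hcase
      have hsmpm : sm * pm ≤ (n:ℝ)*(1-ε0) := by
        rw [← le_div_iff₀ hpm0]; exact hcase
      have hsmpmn : sm * pm < n := by
        have h3 : (n:ℝ)*(1-ε0) < (n:ℝ)*1 := by
          apply mul_lt_mul_of_pos_left _ hn0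
          linarith
        linarith
      rcases hexp with h | h
      · rw [hqstardef, hteq]; exact h
      · linarith
    · have hteq : t = (n:ℝ)*(1-ε0)/pm := min_eq_right hcase
      have htp : t * pm = (n:ℝ)*(1-ε0) := by
        rw [hteq]; field_simp
      have hqs : qstar = pm/ε0 := by
        rw [hqstardef, htp, show (n:ℝ) - (n:ℝ)*(1-ε0) = (n:ℝ)*ε0 by ring]
        exact mul_div_mul_left pm ε0 (ne_of_gt hn0)
      rw [hqs]
      have hε0r : ε0 ≤ pm/(2*r) := min_le_right _ _
      have h2rpos : (0:ℝ) < 2*r := by linarith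
      have h3 : ε0 * (2*r) ≤ pm := (le_div_iff₀ h2rpos).mp hε0r
      have h4 : 2*r ≤ pm/ε0 := by
        rw [le_div_iff₀ hε0]
        calc 2*r*ε0 = ε0 * (2*r) := by ring
        _ ≤ pm := h3
      linarith
  set α : ℝ := (r + qstar)/2 with hαdef
  have hqstar0 : 0 < qstar := lt_trans hr0 hrq
  have hαr : r < α := by rw [hαdef]; linarith
  have hαq : α < qstar := by rw [hαdef]; linarith
  have hα0 : 0 < α := lt_trans hr0 hαr
  set β : ℝ := t*pm/(n:ℝ) with hβdef
  have hβ0 : 0 < β := by positivity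
  have hβ1 : β < 1 := by rw [hβdef, div_lt_one hn0]; exact htpmn
  have hγ : α * (1 - β) ≤ pm := by
    have h2 : α * ((n:ℝ) - t*pm) < (n:ℝ)*pm := by
      rw [hqstardef, lt_div_iff₀ hntpm] at hαq; exact hαq
    have h1 : 1 - β = ((n:ℝ) - t*pm)/(n:ℝ) := by rw [hβdef]; field_simp
    rw [h1]
    rw [show α * (((n:ℝ)-t*pm)/(n:ℝ)) = α*((n:ℝ)-t*pm)/(n:ℝ) by ring]
    rw [div_le_iff₀ hn0]
    linarith
  -- the domain and the integrand
  set B : Set (Rn n) := ball z₀ R with hBdef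
  have hBmeas : MeasurableSet B := measurableSet_ball
  have hμB : volume B < ⊤ := measure_ball_lt_top
  set f : Rn n × Rn n → ℝ≥0∞ := fun z =>
    ENNReal.ofReal (|u z.1 - u z.2| ^ p z.1 z.2 /
      ‖z.1 - z.2‖ ^ ((n : ℝ) + s z.1 z.2 * p z.1 z.2)) with hfdef
  have hfmeas : Measurable f := by
    apply Measurable.ennreal_ofReal
    apply Measurable.div
    · exact ((humeas.comp measurable_fst).sub (humeas.comp measurable_snd)).abs.pow hsp.p_meas
    · exact ((measurable_fst.sub measurable_snd).norm).pow
        (measurable_const.add (hsp.s_meas.mul hsp.p_meas))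
  set D : ℝ≥0∞ := crossModular n B s p u with hDdef
  have hDtop : D ≠ ⊤ := huMod.ne
  set Dr : ℝ := D.toReal with hDrdef
  have hDeq : D = ∫⁻ z in crossSet n B, f z := rfl
  -- the level sets
  set A : ℕ → Set (Rn n) := fun k => B ∩ {x | (2:ℝ)^k < |u x|} with hAdef
  have hAmeas : ∀ k, MeasurableSet (A k) :=
    fun k => hBmeas.inter (measurableSet_lt measurable_const humeas.abs)
  have hAsubB : ∀ k, A k ⊆ B := fun k => inter_subset_left
  have hAanti : Antitone A := by
    intro k m hkm x hx
    refine ⟨hx.1, ?_⟩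
    have h1 : (2:ℝ)^k ≤ (2:ℝ)^m := pow_le_pow_right₀ one_le_two hkm
    exact lt_of_le_of_lt h1 hx.2
  have hATop : ∀ k, volume (A k) ≠ ⊤ :=
    fun k => (lt_of_le_of_lt (measure_mono (hAsubB k)) hμB).ne
  set ak : ℕ → ℝ := fun k => (volume (A k)).toReal with hakdef
  have hak0 : ∀ k, 0 ≤ ak k := fun k => ENNReal.toReal_nonneg
  have hainter : ⋂ k, A k = ∅ := by
    ext x
    simp only [mem_iInter, mem_empty_iff_false, iff_false, not_forall]
    obtain ⟨m, hm⟩ := pow_unbounded_of_one_lt |u x| one_lt_two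
    exact ⟨m, fun hx => absurd hx.2 (not_lt.mpr hm.le)⟩
  have hatend : Filter.Tendsto (fun k => volume (A k)) Filter.atTop (nhds 0) := by
    have h := MeasureTheory.tendsto_measure_iInter_atTop (μ := volume)
      (fun k => (hAmeas k).nullMeasurableSet) hAanti ⟨0, hATop 0⟩
    rw [hainter, measure_empty] at h
    exact h
  -- small-ball constants
  set c1 : ℝ≥0∞ := volume (ball (0 : Rn n) 1) with hc1def
  have hc1pos : 0 < c1 := measure_ball_pos _ _ one_pos
  have hc1top : c1 ≠ ⊤ := measure_ball_lt_top.ne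
  set cB : ℝ := c1.toReal with hcBdef
  have hcB0 : 0 < cB := ENNReal.toReal_pos hc1pos.ne' hc1top
  set m1R : ℝ := min 1 R with hm1Rdef
  have hm1R0 : 0 < m1R := lt_min one_pos hR
  set η : ℝ := cB * (m1R/2)^n / 2 with hηdef
  have hη0 : 0 < η := by positivity
  obtain ⟨K, hK⟩ : ∃ K : ℕ, ∀ k, K ≤ k → volume (A k) ≤ ENNReal.ofReal η := by
    have h := hatend.eventually_lt_const
      (show (0:ℝ≥0∞) < ENNReal.ofReal η from ENNReal.ofReal_pos.mpr hη0)
    obtain ⟨K, hK⟩ := Filter.eventually_atTop.mp h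
    exact ⟨K, fun k hk => (hK k hk).le⟩
  -- product to iterated integral
  have hprod : ∀ S T : Set (Rn n), ∫⁻ z in S ×ˢ T, f z = ∫⁻ x in S, ∫⁻ y in T, f (x, y) := by
    intro S T
    have hv : (volume : Measure (Rn n × Rn n)) = (volume : Measure (Rn n)).prod volume := rfl
    rw [hv, ← Measure.prod_restrict, lintegral_prod _ hfmeas.aemeasurable]
  have hDsub : ∀ S : Set (Rn n), S ⊆ B → (∫⁻ x in S, ∫⁻ y in B, f (x, y)) ≤ D := by
    intro S hS
    rw [← hprod, hDeq]
    exact lintegral_mono_set (fun z hz => ⟨mem_univ _, fun hc => hc.1 (hS hz.1)⟩)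
  -- the key recursive estimate
  set C0 : ℝ := Dr * (2:ℝ)^((n:ℝ) + t*pm) * (2/cB)^(((n:ℝ) + t*pm)/(n:ℝ)) with hC0def
  have hDr0 : 0 ≤ Dr := ENNReal.toReal_nonneg
  have hC00 : 0 ≤ C0 := by
    apply mul_nonneg (mul_nonneg hDr0 (Real.rpow_nonneg (by norm_num) _))
    exact Real.rpow_nonneg (by positivity) _
  have hrec : ∀ k, K ≤ k → ak (k+1) ≤ C0 * (2:ℝ)^(-(k:ℝ)*pm) * ak k ^ β := by
    intro k hk
    by_cases hzero : volume (A k) = 0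
    · have h1 : volume (A (k+1)) = 0 :=
        le_antisymm (le_trans (measure_mono (hAanti (Nat.le_succ k))) hzero.le) zero_le
      have h2 : ak k = 0 := by rw [hakdef]; simp [hzero]
      have h3 : ak (k+1) = 0 := by rw [hakdef]; simp [h1]
      rw [h2, h3, Real.zero_rpow (ne_of_gt hβ0)]
      simp
    · have hakpos : 0 < ak k := ENNReal.toReal_pos hzero (hATop k)
      set ρ : ℝ := 2 * (2 * ak k / cB) ^ ((n:ℝ)⁻¹) with hρdef
      have hρ0 : 0 < ρ := by positivity
      have hakη : ak k ≤ η := by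
        have h1 := hK k hk
        calc ak k ≤ (ENNReal.ofReal η).toReal := ENNReal.toReal_mono ENNReal.ofReal_ne_top h1
        _ = η := ENNReal.toReal_ofReal hη0.le
      have hρle : ρ ≤ m1R := by
        have h1 : 2 * ak k / cB ≤ (m1R/2)^n := by
          rw [div_le_iff₀ hcB0]
          calc 2 * ak k ≤ 2 * η := by linarith
          _ = (m1R/2)^n * cB := by rw [hηdef]; ring
        have h2 : (2 * ak k / cB) ^ ((n:ℝ)⁻¹) ≤ ((m1R/2)^n) ^ ((n:ℝ)⁻¹) :=
          Real.rpow_le_rpow (by positivity) h1 (by positivity)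
        rw [Real.pow_rpow_inv_natCast (by positivity) hnne] at h2
        rw [hρdef]
        linarith
      have hρR : ρ ≤ R := le_trans hρle (min_le_right _ _)
      have hρ1 : ρ ≤ 1 := le_trans hρle (min_le_left _ _)
      have hvol2 : ENNReal.ofReal ((ρ/2)^n) * c1 = ENNReal.ofReal (2 * ak k) := by
        have h1 : (ρ/2)^n = 2 * ak k / cB := by
          rw [hρdef, show 2 * (2 * ak k / cB) ^ ((n:ℝ)⁻¹) / 2
            = (2 * ak k / cB) ^ ((n:ℝ)⁻¹) by ring]
          exact Real.rpow_inv_natCast_pow (by positivity) hnne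
        rw [h1, ← ENNReal.ofReal_toReal hc1top, ← hcBdef,
          ← ENNReal.ofReal_mul (by positivity)]
        rw [div_mul_cancel₀]
        exact ne_of_gt hcB0
      have hinner : ∀ x ∈ A (k+1),
          ENNReal.ofReal ((2:ℝ)^((k:ℝ)*pm) / ρ^((n:ℝ) + t*pm)) * ENNReal.ofReal (ak k)
            ≤ ∫⁻ y in B, f (x, y) := by
        intro x hx
        set Fx : Set (Rn n) := (B \ A k) ∩ ball x ρ with hFxdef
        have hFxmeas : MeasurableSet Fx := (hBmeas.diff (hAmeas k)).inter measurableSet_ball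
        have hFxvol : ENNReal.ofReal (ak k) ≤ volume Fx := by
          have hsub : B ∩ ball x ρ ⊆ Fx ∪ A k := by
            intro y hy
            by_cases hyA : y ∈ A k
            · exact Or.inr hyA
            · exact Or.inl ⟨⟨hy.1, hyA⟩, hy.2⟩
          have h2 : ENNReal.ofReal (2 * ak k) ≤ volume Fx + volume (A k) := by
            calc ENNReal.ofReal (2 * ak k) = ENNReal.ofReal ((ρ/2)^n) * c1 := hvol2.symm
            _ ≤ volume (B ∩ ball x ρ) :=
                geom_ball_aux n (by omega) z₀ R hR x
                  (hAsubB _ (hAanti (Nat.le_succ k) hx)) ρ hρ0 hρR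
            _ ≤ volume (Fx ∪ A k) := measure_mono hsub
            _ ≤ volume Fx + volume (A k) := measure_union_le _ _
          have h3 : volume (A k) = ENNReal.ofReal (ak k) :=
            (ENNReal.ofReal_toReal (hATop k)).symm
          rw [show (2:ℝ) * ak k = ak k + ak k by ring,
            ENNReal.ofReal_add (hak0 k) (hak0 k), h3] at h2
          exact (ENNReal.add_le_add_iff_right ENNReal.ofReal_ne_top).mp h2
        have hpoint : ∀ y ∈ Fx,
            ENNReal.ofReal ((2:ℝ)^((k:ℝ)*pm) / ρ^((n:ℝ) + t*pm)) ≤ f (x, y) := by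
          intro y hy
          have hyB : y ∈ B := hy.1.1
          have hyA : y ∉ A k := hy.1.2
          have hyb : dist y x < ρ := mem_ball.mp hy.2
          have hxA : x ∈ A k := hAanti (Nat.le_succ k) hx
          have hyu : |u y| ≤ (2:ℝ)^k := by
            by_contra hcon
            exact hyA ⟨hyB, lt_of_not_ge hcon⟩
          have hxu : (2:ℝ)^(k+1) < |u x| := hx.2
          have habs : (2:ℝ)^k ≤ |u x - u y| := by
            have h1 : |u x| - |u y| ≤ |u x - u y| := abs_sub_abs_le_abs_sub _ _
            have h2 : (2:ℝ)^(k+1) = 2 * 2^k := by ring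
            linarith
          have h2k1 : (1:ℝ) ≤ (2:ℝ)^k := one_le_pow₀ one_le_two
          have hd0 : (0:ℝ) < ‖x - y‖ := by
            rw [norm_sub_pos_iff]
            intro hxy
            rw [hxy] at hxA
            exact hyA hxA
          have hdρ : ‖x - y‖ < ρ := by
            rw [← dist_eq_norm, dist_comm]
            exact hyb
          have hp0 : (0:ℝ) ≤ p x y := le_trans (by linarith) (hsp.p_bounds x y).1
          have hnum : (2:ℝ)^((k:ℝ)*pm) ≤ |u x - u y| ^ p x y := by
            have h1 : ((2:ℝ)^k : ℝ) ^ pm ≤ ((2:ℝ)^k : ℝ) ^ (p x y) :=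
              Real.rpow_le_rpow_of_exponent_le h2k1 (hsp.p_bounds x y).1
            have h2 : ((2:ℝ)^k : ℝ) ^ (p x y) ≤ |u x - u y| ^ (p x y) :=
              Real.rpow_le_rpow (by positivity) habs hp0
            calc (2:ℝ)^((k:ℝ)*pm) = ((2:ℝ)^k : ℝ) ^ pm := by
                  rw [← Real.rpow_natCast (2:ℝ) k, ← Real.rpow_mul (by norm_num)]
            _ ≤ _ := le_trans h1 h2
          have hden : ‖x - y‖ ^ ((n:ℝ) + s x y * p x y) ≤ ρ ^ ((n:ℝ) + t*pm) := by
            have he1 : (n:ℝ) + t*pm ≤ (n:ℝ) + s x y * p x y := by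
              have hs1 : t ≤ s x y := le_trans htsm (hsp.s_bounds x y).1
              have hp1 : pm ≤ p x y := (hsp.p_bounds x y).1
              have h6 : t * pm ≤ s x y * p x y :=
                mul_le_mul hs1 hp1 hpm0.le (le_trans hsm0.le ((hsp.s_bounds x y).1))
              linarith
            calc ‖x - y‖ ^ ((n:ℝ) + s x y * p x y) ≤ ‖x - y‖ ^ ((n:ℝ) + t*pm) :=
                  Real.rpow_le_rpow_of_exponent_ge hd0
                    (le_of_lt (lt_of_lt_of_le hdρ hρ1)) he1
            _ ≤ ρ ^ ((n:ℝ) + t*pm) := Real.rpow_le_rpow hd0.le hdρ.le (by positivity)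
          apply ENNReal.ofReal_le_ofReal
          exact div_le_div₀ (by positivity) hnum (Real.rpow_pos_of_pos hd0 _) hden
        calc ENNReal.ofReal ((2:ℝ)^((k:ℝ)*pm) / ρ^((n:ℝ) + t*pm)) * ENNReal.ofReal (ak k)
            ≤ ENNReal.ofReal ((2:ℝ)^((k:ℝ)*pm) / ρ^((n:ℝ) + t*pm)) * volume Fx :=
              mul_le_mul_right hFxvol _
        _ = ∫⁻ _ in Fx, ENNReal.ofReal ((2:ℝ)^((k:ℝ)*pm) / ρ^((n:ℝ) + t*pm)) :=
              (setLIntegral_const _ _).symm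
        _ ≤ ∫⁻ y in Fx, f (x, y) := setLIntegral_mono' hFxmeas hpoint
        _ ≤ ∫⁻ y in B, f (x, y) := lintegral_mono_set (fun y hy => hy.1.1)
      have houter : ENNReal.ofReal ((2:ℝ)^((k:ℝ)*pm) / ρ^((n:ℝ) + t*pm)) * ENNReal.ofReal (ak k)
          * volume (A (k+1)) ≤ D := by
        calc ENNReal.ofReal ((2:ℝ)^((k:ℝ)*pm) / ρ^((n:ℝ) + t*pm)) * ENNReal.ofReal (ak k)
            * volume (A (k+1))
            = ∫⁻ _ in A (k+1),
                ENNReal.ofReal ((2:ℝ)^((k:ℝ)*pm)/ρ^((n:ℝ)+t*pm)) * ENNReal.ofReal (ak k) :=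
              (setLIntegral_const _ _).symm
        _ ≤ ∫⁻ x in A (k+1), ∫⁻ y in B, f (x,y) := setLIntegral_mono' (hAmeas (k+1)) hinner
        _ ≤ D := hDsub _ (hAsubB _)
      set cρ : ℝ := (2:ℝ)^((k:ℝ)*pm) / ρ^((n:ℝ)+t*pm) with hcρdef
      have hcρ0 : 0 < cρ := by positivity
      have hreal : cρ * ak k * ak (k+1) ≤ Dr := by
        have h2 := ENNReal.toReal_mono hDtop houter
        rwa [ENNReal.toReal_mul, ENNReal.toReal_mul, ENNReal.toReal_ofReal hcρ0.le,
          ENNReal.toReal_ofReal (hak0 k)] at h2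
      have hdiv : ak (k+1) ≤ Dr / (cρ * ak k) := by
        rw [le_div_iff₀ (by positivity)]
        calc ak (k+1) * (cρ * ak k) = cρ * ak k * ak (k+1) := by ring
        _ ≤ Dr := hreal
      have hρpow : ρ ^ ((n:ℝ)+t*pm)
          = (2:ℝ)^((n:ℝ)+t*pm) * ((2/cB)^(((n:ℝ)+t*pm)/(n:ℝ)) * ak k ^ (((n:ℝ)+t*pm)/(n:ℝ))) := by
        rw [hρdef, Real.mul_rpow (by norm_num) (by positivity)]
        have h1 : ((2 * ak k / cB) ^ ((n:ℝ)⁻¹)) ^ ((n:ℝ)+t*pm)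
            = (2*ak k/cB) ^ (((n:ℝ)+t*pm)/(n:ℝ)) := by
          rw [← Real.rpow_mul (by positivity)]
          congr 1
          field_simp
        rw [h1, show (2:ℝ) * ak k / cB = (2/cB) * ak k by ring,
          Real.mul_rpow (by positivity) (hak0 k)]
      have hsplit2 : ak k ^ (((n:ℝ)+t*pm)/(n:ℝ)) = ak k ^ β * ak k := by
        have h1 : ((n:ℝ)+t*pm)/(n:ℝ) = β + 1 := by
          rw [hβdef]; field_simp; ring
        rw [h1, Real.rpow_add hakpos, Real.rpow_one]
      have hfrac : Dr / (cρ * ak k) = C0 * (2:ℝ)^(-(k:ℝ)*pm) * ak k ^ β := by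
        have hneg : (2:ℝ)^(-(k:ℝ)*pm) = ((2:ℝ)^((k:ℝ)*pm))⁻¹ := by
          rw [show -(k:ℝ)*pm = -((k:ℝ)*pm) by ring, Real.rpow_neg (by norm_num : (0:ℝ) ≤ 2)]
        rw [hcρdef, hρpow, hsplit2, hC0def, hneg]
        have h2 : ((2:ℝ)^((k:ℝ)*pm)) ≠ 0 := ne_of_gt (Real.rpow_pos_of_pos two_pos _)
        field_simp
      rw [← hfrac]
      exact hdiv
  -- decay of the level sets
  obtain ⟨M, hM1, hMk⟩ := decay_rec_aux ak C0 pm β α K hak0 hC00 hβ0.le hβ1 hγ hrec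
  -- higher integrability of u on B
  set J : ℝ≥0∞ := ∫⁻ x in B, ENNReal.ofReal (|u x| ^ r) with hJdef
  have hJtop : J < ⊤ := by
    have hsplit : J ≤ (∫⁻ x in B \ A K, ENNReal.ofReal (|u x| ^ r))
        + ∫⁻ x in A K, ENNReal.ofReal (|u x| ^ r) := by
      rw [hJdef]
      calc (∫⁻ x in B, ENNReal.ofReal (|u x| ^ r))
          ≤ ∫⁻ x in (B \ A K) ∪ A K, ENNReal.ofReal (|u x| ^ r) := by
            apply lintegral_mono_set
            intro x hx
            by_cases h : x ∈ A K
            · exact Or.inr h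
            · exact Or.inl ⟨hx, h⟩
      _ ≤ _ := lintegral_union_le _ _ _
    have h1 : (∫⁻ x in B \ A K, ENNReal.ofReal (|u x| ^ r))
        ≤ ENNReal.ofReal (((2:ℝ)^K) ^ r) * volume B := by
      calc (∫⁻ x in B \ A K, ENNReal.ofReal (|u x| ^ r))
          ≤ ∫⁻ _ in B \ A K, ENNReal.ofReal (((2:ℝ)^K) ^ r) := by
            apply setLIntegral_mono' (hBmeas.diff (hAmeas K))
            intro x hx
            apply ENNReal.ofReal_le_ofReal
            apply Real.rpow_le_rpow (abs_nonneg _) ?_ hr0.le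
            by_contra hcon
            exact hx.2 ⟨hx.1, lt_of_not_ge hcon⟩
      _ = ENNReal.ofReal (((2:ℝ)^K) ^ r) * volume (B \ A K) := setLIntegral_const _ _
      _ ≤ _ := mul_le_mul_right (measure_mono diff_subset) _
    have hcover : A K ⊆ ⋃ j : ℕ, (A (K + j) \ A (K + j + 1)) := by
      intro x hx
      have hex : ∃ j, x ∉ A (K + j + 1) := by
        obtain ⟨m, hm⟩ := pow_unbounded_of_one_lt |u x| one_lt_two
        refine ⟨m, fun hc => ?_⟩
        have h2 : (2:ℝ)^m ≤ (2:ℝ)^(K+m+1) := pow_le_pow_right₀ one_le_two (by omega)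
        exact absurd hc.2 (not_lt.mpr (le_trans hm.le h2))
      set j0 := Nat.find hex with hj0
      have hnotin : x ∉ A (K + j0 + 1) := Nat.find_spec hex
      have hin : x ∈ A (K + j0) := by
        rcases Nat.eq_zero_or_pos j0 with h | h
        · rw [h]; simpa using hx
        · have h4 := Nat.find_min hex (show j0 - 1 < j0 by omega)
          have h3 : K + (j0 - 1) + 1 = K + j0 := by omega
          rw [h3] at h4
          exact not_not.mp h4
      exact mem_iUnion.mpr ⟨j0, hin, hnotin⟩
    set x₀ : ℝ≥0∞ := ENNReal.ofReal ((2:ℝ)^(r - α)) with hx₀def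
    set c₅ : ℝ := M * (2:ℝ)^(((K:ℝ)+1)*r - α*(K:ℝ)) with hc₅def
    have hc₅0 : 0 ≤ c₅ := mul_nonneg (by linarith) (Real.rpow_nonneg (by norm_num) _)
    have hterm : ∀ j : ℕ, (∫⁻ x in A (K + j) \ A (K + j + 1), ENNReal.ofReal (|u x| ^ r))
        ≤ ENNReal.ofReal c₅ * x₀^j := by
      intro j
      have hb1 : ∀ x ∈ A (K + j) \ A (K + j + 1),
          ENNReal.ofReal (|u x| ^ r) ≤ ENNReal.ofReal (((2:ℝ)^(K+j+1)) ^ r) := by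
        intro x hx
        apply ENNReal.ofReal_le_ofReal
        apply Real.rpow_le_rpow (abs_nonneg _) ?_ hr0.le
        by_contra hcon
        exact hx.2 ⟨hx.1.1, lt_of_not_ge hcon⟩
      calc (∫⁻ x in A (K+j) \ A (K+j+1), ENNReal.ofReal (|u x| ^ r))
          ≤ ∫⁻ _ in A (K+j) \ A (K+j+1), ENNReal.ofReal (((2:ℝ)^(K+j+1)) ^ r) :=
            setLIntegral_mono' ((hAmeas _).diff (hAmeas _)) hb1
      _ = ENNReal.ofReal (((2:ℝ)^(K+j+1)) ^ r) * volume (A (K+j) \ A (K+j+1)) :=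
            setLIntegral_const _ _
      _ ≤ ENNReal.ofReal (((2:ℝ)^(K+j+1)) ^ r) * ENNReal.ofReal (M * (2:ℝ)^(-α*((K:ℝ)+(j:ℝ)))) := by
          apply mul_le_mul_right
          calc volume (A (K+j) \ A (K+j+1)) ≤ volume (A (K+j)) := measure_mono diff_subset
          _ = ENNReal.ofReal (ak (K+j)) := (ENNReal.ofReal_toReal (hATop _)).symm
          _ ≤ ENNReal.ofReal (M * (2:ℝ)^(-α*((K:ℝ)+(j:ℝ)))) := by
              apply ENNReal.ofReal_le_ofReal
              have h5 := hMk (K+j) (Nat.le_add_right _ _)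
              have h6 : ((K+j : ℕ) : ℝ) = (K:ℝ)+(j:ℝ) := by push_cast; ring
              rwa [h6] at h5
      _ ≤ ENNReal.ofReal c₅ * x₀^j := by
          rw [hx₀def, ← ENNReal.ofReal_pow (Real.rpow_nonneg (by norm_num) _) j,
            ← ENNReal.ofReal_mul (by positivity), ← ENNReal.ofReal_mul hc₅0]
          apply ENNReal.ofReal_le_ofReal
          apply le_of_eq
          rw [hc₅def]
          rw [← Real.rpow_natCast (2:ℝ) (K+j+1), ← Real.rpow_mul (by norm_num)]
          rw [← Real.rpow_natCast ((2:ℝ)^(r-α)) j, ← Real.rpow_mul (by norm_num)]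
          rw [show ((K+j+1 : ℕ) : ℝ) = (K:ℝ)+(j:ℝ)+1 by push_cast; ring]
          rw [mul_comm ((2:ℝ) ^ (((K:ℝ)+(j:ℝ)+1) * r)) _, mul_assoc, ← Real.rpow_add two_pos,
            mul_assoc, ← Real.rpow_add two_pos]
          congr 1
          congr 1
          ring
    have hsum : (∫⁻ x in A K, ENNReal.ofReal (|u x| ^ r))
        ≤ ENNReal.ofReal c₅ * (1 - x₀)⁻¹ := by
      calc (∫⁻ x in A K, ENNReal.ofReal (|u x| ^ r))
          ≤ ∫⁻ x in ⋃ j : ℕ, (A (K+j) \ A (K+j+1)), ENNReal.ofReal (|u x| ^ r) :=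
            lintegral_mono_set hcover
      _ ≤ ∑' j : ℕ, ∫⁻ x in A (K+j) \ A (K+j+1), ENNReal.ofReal (|u x| ^ r) :=
            lintegral_iUnion_le _ _
      _ ≤ ∑' j : ℕ, ENNReal.ofReal c₅ * x₀^j := ENNReal.tsum_le_tsum hterm
      _ = ENNReal.ofReal c₅ * ∑' j : ℕ, x₀^j := ENNReal.tsum_mul_left
      _ = ENNReal.ofReal c₅ * (1 - x₀)⁻¹ := by rw [ENNReal.tsum_geometric]
    have hgeo : (1 - x₀)⁻¹ < ⊤ := by
      rw [ENNReal.inv_lt_top]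
      apply tsub_pos_of_lt
      rw [hx₀def, ENNReal.ofReal_lt_one]
      exact Real.rpow_lt_one_of_one_lt_of_neg one_lt_two (by linarith)
    calc J ≤ _ := hsplit
    _ < ⊤ := by
        apply ENNReal.add_lt_top.mpr
        constructor
        · exact lt_of_le_of_lt h1 (ENNReal.mul_lt_top ENNReal.ofReal_lt_top hμB)
        · exact lt_of_le_of_lt hsum (ENNReal.mul_lt_top ENNReal.ofReal_lt_top hgeo)
  -- the final tail estimate
  set Fg : Rn n → ℝ≥0∞ := fun x => ∫⁻ y,
    ENNReal.ofReal (|g y| ^ (p x y - 1) / (1 + ‖y‖) ^ ((n:ℝ) + s x y * p x y)) with hFgdef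
  have hFu : ∀ x, (∫⁻ y,
      ENNReal.ofReal (|u y| ^ (p x y - 1) / (1 + ‖y‖) ^ ((n:ℝ) + s x y * p x y)))
      ≤ (volume B + J) + Fg x := by
    intro x
    rw [← lintegral_add_compl (fun y =>
      ENNReal.ofReal (|u y| ^ (p x y - 1) / (1 + ‖y‖) ^ ((n:ℝ) + s x y * p x y))) hBmeas]
    apply add_le_add
    · calc (∫⁻ y in B,
          ENNReal.ofReal (|u y| ^ (p x y - 1) / (1 + ‖y‖) ^ ((n:ℝ) + s x y * p x y)))
          ≤ ∫⁻ y in B, (1 + ENNReal.ofReal (|u y| ^ r)) := by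
            apply lintegral_mono
            intro y
            have hsy0 : 0 ≤ s x y * p x y := by
              have h7 := (hsp.s_bounds x y).1
              have h8 := (hsp.p_bounds x y).1
              exact mul_nonneg (by linarith) (by linarith)
            have hpy1 : 0 ≤ p x y - 1 := by
              have := (hsp.p_bounds x y).1; linarith
            have h1 : |u y| ^ (p x y - 1) / (1 + ‖y‖) ^ ((n:ℝ) + s x y * p x y)
                ≤ |u y| ^ (p x y - 1) := by
              apply div_le_self (by positivity)
              apply Real.one_le_rpow (by linarith [norm_nonneg y]) (by positivity)
            have h2 : |u y| ^ (p x y - 1) ≤ 1 + |u y| ^ r := by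
              rcases le_total |u y| 1 with hc | hc
              · have h3 := Real.rpow_le_one (abs_nonneg _) hc hpy1
                have h4 := Real.rpow_nonneg (abs_nonneg (u y)) r
                linarith
              · have h3 : |u y| ^ (p x y - 1) ≤ |u y| ^ r := by
                  apply Real.rpow_le_rpow_of_exponent_le hc
                  rw [hrdef]
                  have := (hsp.p_bounds x y).2; linarith
                linarith
            calc ENNReal.ofReal (|u y| ^ (p x y - 1) / (1 + ‖y‖) ^ ((n:ℝ) + s x y * p x y))
                ≤ ENNReal.ofReal (1 + |u y|^r) := ENNReal.ofReal_le_ofReal (le_trans h1 h2)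
            _ = 1 + ENNReal.ofReal (|u y|^r) := by
                rw [ENNReal.ofReal_add one_pos.le (Real.rpow_nonneg (abs_nonneg _) _),
                  ENNReal.ofReal_one]
      _ = volume B + J := by
          rw [lintegral_add_left measurable_const]
          congr 1
          rw [setLIntegral_one]
    · have hcongr : (∫⁻ y in Bᶜ,
          ENNReal.ofReal (|u y| ^ (p x y - 1) / (1 + ‖y‖) ^ ((n:ℝ) + s x y * p x y)))
          = ∫⁻ y in Bᶜ,
          ENNReal.ofReal (|g y| ^ (p x y - 1) / (1 + ‖y‖) ^ ((n:ℝ) + s x y * p x y)) := by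
        apply lintegral_congr_ae
        filter_upwards [hug] with y hy
        rw [hy]
      rw [hcongr, hFgdef]
      exact setLIntegral_le_lintegral _ _
  have hTg : tailSemi n s p g B < ⊤ := hgT.2
  have hae : ∀ᵐ x ∂(volume.restrict B), Fg x ≤ tailSemi n s p g B := ae_le_essSup
  have hfinal : tailSemi n s p u B ≤ (volume B + J) + tailSemi n s p g B := by
    apply essSup_le_of_ae_le
    filter_upwards [hae] with x hx
    exact le_trans (hFu x) (add_le_add_right hx _)
    isBoundedDefault
  exact lt_of_le_of_lt hfinal (ENNReal.add_lt_top.mpr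
    ⟨ENNReal.add_lt_top.mpr ⟨hμB, hJtop⟩, hTg⟩)
end
end

section
/- Let p > 1 and a ≥ b ≥ 0. Then for every ε > 0, a^p − b^p ≤ ε a^p + ((p−1)/ε)^{p−1} (a−b)^p; consequently, there is a constant c > 0 depending only on p such that for every ε > 0, a^p − b^p ≤ ε b^p + (ε + c ε^{1−p}) (a−b)^p. -/
open MeasureTheory Metric Set Real
open scoped ENNReal NNReal

noncomputable section

lemma aux_bern {p a b : ℝ} (hp : 1 < p) (hb : 0 ≤ b) (hba : b ≤ a) :
    a ^ p - b ^ p ≤ p * a ^ (p - 1) * (a - b) := by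
  rcases eq_or_lt_of_le (hb.trans hba) with h | ha
  · have hb0 : b = 0 := le_antisymm (h ▸ hba) hb
    subst hb0
    rw [← h, Real.zero_rpow (by positivity : p ≠ 0)]
    simp
  · have hs : (-1 : ℝ) ≤ b / a - 1 := by
      have : 0 ≤ b / a := div_nonneg hb ha.le
      linarith
    have hbern := one_add_mul_self_le_rpow_one_add hs hp.le
    rw [add_sub_cancel] at hbern
    have hmul : (1 + p * (b / a - 1)) * a ^ p ≤ (b / a) ^ p * a ^ p :=
      mul_le_mul_of_nonneg_right hbern (rpow_nonneg ha.le p)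
    rw [Real.div_rpow hb ha.le, div_mul_cancel₀ _ (by positivity : a ^ p ≠ 0)] at hmul
    have hap : a ^ p = a ^ (p - 1) * a := by
      have h := Real.rpow_add ha (p - 1) 1
      rw [Real.rpow_one] at h
      rw [← h]; norm_num
    have : a ^ p * (b / a) = a ^ (p - 1) * b := by
      rw [hap]; field_simp
    nlinarith [this, hmul]

lemma aux_young {p x y ε : ℝ} (hp : 1 < p) (hx : 0 ≤ x) (hy : 0 ≤ y) (hε : 0 < ε) :
    p * x ^ (p - 1) * y ≤ ε * x ^ p + ((p - 1) / ε) ^ (p - 1) * y ^ p := by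
  have hp1 : 0 < p - 1 := by linarith
  set q : ℝ := p / (p - 1) with hq
  have hpq : p.HolderConjugate q := (Real.holderConjugate_iff_eq_conjExponent hp).2 rfl
  have hqp : q.HolderConjugate p := hpq.symm
  set δ : ℝ := (ε / (p - 1)) ^ ((p - 1) / p) with hδ
  have hδpos : 0 < δ := rpow_pos_of_pos (by positivity) _
  have hyoung := Real.young_inequality_of_nonneg (a := δ * x ^ (p - 1)) (b := y / δ)
    (mul_nonneg hδpos.le (rpow_nonneg hx _)) (div_nonneg hy hδpos.le) hqp
  -- hyoung : δ * x^(p-1) * (y/δ) ≤ (δ * x^(p-1))^q / q + (y/δ)^p / p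
  have hXY : δ * x ^ (p - 1) * (y / δ) = x ^ (p - 1) * y := by
    field_simp
  have hδq : δ ^ q = ε / (p - 1) := by
    rw [hδ, ← Real.rpow_mul (by positivity)]
    rw [div_mul_div_comm, mul_comm (p-1) p, div_self (by positivity), Real.rpow_one]
  have hδp : δ ^ p = (ε / (p - 1)) ^ (p - 1) := by
    rw [hδ, ← Real.rpow_mul (by positivity), div_mul_cancel₀ _ (by positivity : p ≠ 0)]
  have hXq : (δ * x ^ (p - 1)) ^ q = (ε / (p - 1)) * x ^ p := by
    rw [Real.mul_rpow hδpos.le (rpow_nonneg hx _), hδq,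
      ← Real.rpow_mul hx]
    congr 1
    rw [hq]
    field_simp
  have hYp : (y / δ) ^ p = ((p - 1) / ε) ^ (p - 1) * y ^ p := by
    rw [Real.div_rpow hy hδpos.le, hδp, div_eq_mul_inv, ← Real.inv_rpow (by positivity),
      inv_div]
    ring
  rw [hXY, hXq, hYp] at hyoung
  have hq_pos : 0 < q := hqp.pos
  calc p * x ^ (p - 1) * y = p * (x ^ (p - 1) * y) := by ring
    _ ≤ p * ((ε / (p - 1)) * x ^ p / q + ((p - 1) / ε) ^ (p - 1) * y ^ p / p) :=
        mul_le_mul_of_nonneg_left hyoung (by positivity)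
    _ = ε * x ^ p + ((p - 1) / ε) ^ (p - 1) * y ^ p := by
        have h1 : p ≠ 0 := by positivity
        have h2 : p - 1 ≠ 0 := hp1.ne'
        rw [hq]
        field_simp

lemma aux_two {p x y : ℝ} (hp : 1 < p) (hx : 0 ≤ x) (hy : 0 ≤ y) :
    (x + y) ^ p ≤ 2 ^ (p - 1) * (x ^ p + y ^ p) := by
  have h := NNReal.rpow_add_le_mul_rpow_add_rpow x.toNNReal y.toNNReal hp.le
  have h2 := NNReal.coe_le_coe.2 h
  push_cast at h2
  rwa [Real.coe_toNNReal x hx, Real.coe_toNNReal y hy] at h2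

/-- **Lemma `lemineq1` (elementary power inequality).** -/
theorem power_inequality (pe : ℝ) (hpe : 1 < pe) :
    (∀ a b ε : ℝ, 0 ≤ b → b ≤ a → 0 < ε →
      a ^ pe - b ^ pe ≤ ε * a ^ pe + ((pe - 1) / ε) ^ (pe - 1) * (a - b) ^ pe) ∧
    ∃ c : ℝ, 0 < c ∧ ∀ a b ε : ℝ, 0 ≤ b → b ≤ a → 0 < ε →
      a ^ pe - b ^ pe ≤ ε * b ^ pe + (ε + c * ε ^ (1 - pe)) * (a - b) ^ pe := by
  have hp1 : 0 < pe - 1 := by linarith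
  have key : ∀ a b ε : ℝ, 0 ≤ b → b ≤ a → 0 < ε →
      a ^ pe - b ^ pe ≤ ε * a ^ pe + ((pe - 1) / ε) ^ (pe - 1) * (a - b) ^ pe := by
    intro a b ε hb hba hε
    calc a ^ pe - b ^ pe ≤ pe * a ^ (pe - 1) * (a - b) := aux_bern hpe hb hba
      _ ≤ ε * a ^ pe + ((pe - 1) / ε) ^ (pe - 1) * (a - b) ^ pe :=
          aux_young hpe (hb.trans hba) (sub_nonneg.2 hba) hε
  refine ⟨key, ((pe - 1) * 2 ^ (pe - 1)) ^ (pe - 1), ?_, ?_⟩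
  · exact Real.rpow_pos_of_pos (mul_pos hp1 (Real.rpow_pos_of_pos two_pos _)) _
  · intro a b ε hb hba hε
    set c : ℝ := ((pe - 1) * 2 ^ (pe - 1)) ^ (pe - 1) with hc
    have h2pos : (0:ℝ) < 2 ^ (pe - 1) := Real.rpow_pos_of_pos two_pos _
    set ε' : ℝ := ε / 2 ^ (pe - 1) with hε'def
    have hε' : 0 < ε' := div_pos hε h2pos
    have h1 := key a b ε' hb hba hε'
    have h2 : a ^ pe ≤ 2 ^ (pe - 1) * (b ^ pe + (a - b) ^ pe) := by
      have h := aux_two hpe hb (sub_nonneg.2 hba)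
      rwa [show b + (a - b) = a from by ring] at h
    have h3 : ε' * a ^ pe ≤ ε * (b ^ pe + (a - b) ^ pe) := by
      have := mul_le_mul_of_nonneg_left h2 hε'.le
      rwa [← mul_assoc, hε'def, div_mul_cancel₀ _ h2pos.ne'] at this
    have h4 : ((pe - 1) / ε') ^ (pe - 1) = c * ε ^ (1 - pe) := by
      have hεinv : ε ^ (1 - pe) = (ε⁻¹) ^ (pe - 1) := by
        rw [Real.inv_rpow hε.le, ← Real.rpow_neg hε.le]
        norm_num
      rw [hε'def, show (pe - 1) / (ε / 2 ^ (pe - 1)) = (pe - 1) * 2 ^ (pe - 1) * ε⁻¹ from by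
        field_simp,
        Real.mul_rpow (by positivity) (by positivity), hεinv, hc]
    rw [h4] at h1
    nlinarith [h1, h3]
end
end

section
/- Let s, p : ℝⁿ×ℝⁿ → ℝ be symmetric measurable functions satisfying the standing bounds, let B_r ⊂ B_{2r} ⊂ ℝⁿ be concentric balls, let v ∈ L^{p⁺}(B_{2r}) satisfy ρ_{s(·,·),p(·,·)}(v; B_{2r}) < ∞, and let η : ℝⁿ → ℝ be bounded and Lipschitz with η = 0 on ℝⁿ \ B_r. Define w : ℝⁿ → ℝ by w = vη on B_{2r} and w = 0 outside B_{2r}. Then ρ_{s(·,·),p(·,·)}(w; ℝⁿ) := ∫_{ℝⁿ}∫_{ℝⁿ} |w(x)−w(y)|^{p(x,y)}/|x−y|^{n+s(x,y)p(x,y)} dy dx < ∞. In particular, w belongs to 𝕎^{s(·,·),p(·,·)}(Ω) for every bounded open Ω ⊇ B_{2r}. -/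
open MeasureTheory Metric Set Real
open scoped ENNReal NNReal

noncomputable section

/- ### Auxiliary lemmas ### -/

lemma rpow_le_one_add_rpow {b q Q : ℝ} (hb : 0 ≤ b) (hq : 0 ≤ q) (hQ : q ≤ Q) :
    b ^ q ≤ 1 + b ^ Q := by
  rcases le_or_gt b 1 with h | h
  · calc b ^ q ≤ 1 := Real.rpow_le_one hb h hq
    _ ≤ 1 + b ^ Q := le_add_of_nonneg_right (Real.rpow_nonneg hb _)
  · calc b ^ q ≤ b ^ Q := Real.rpow_le_rpow_of_exponent_le h.le hQ
    _ ≤ 1 + b ^ Q := le_add_of_nonneg_left one_pos.le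

lemma add_rpow_le' {a b q : ℝ} (ha : 0 ≤ a) (hb : 0 ≤ b) (hq : 0 ≤ q) :
    (a + b) ^ q ≤ 2 ^ q * (a ^ q + b ^ q) := by
  have h1 : a + b ≤ 2 * max a b := by
    rcases max_cases a b with ⟨h, h'⟩ | ⟨h, h'⟩ <;> linarith
  have h2 : (max a b) ^ q ≤ a ^ q + b ^ q := by
    rcases max_cases a b with ⟨h, h'⟩ | ⟨h, h'⟩ <;> rw [h]
    · exact le_add_of_nonneg_right (Real.rpow_nonneg hb _)
    · exact le_add_of_nonneg_left (Real.rpow_nonneg ha _)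
  calc (a + b) ^ q ≤ (2 * max a b) ^ q := Real.rpow_le_rpow (by positivity) h1 hq
  _ = 2 ^ q * (max a b) ^ q := Real.mul_rpow (by norm_num) (le_max_of_le_left ha)
  _ ≤ 2 ^ q * (a ^ q + b ^ q) :=
      mul_le_mul_of_nonneg_left h2 (Real.rpow_nonneg (by norm_num) _)

lemma rpow_var_exp_le_small {t T eps M a : ℝ} (ht : 0 ≤ t) (htT : t ≤ T)
    (heps : 0 < eps) (ha1 : eps ≤ a) (ha2 : a ≤ M) :
    t ^ a ≤ max (T ^ M) 1 * t ^ eps := by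
  rcases eq_or_lt_of_le ht with h0 | h0
  · rw [← h0, Real.zero_rpow (by linarith), Real.zero_rpow heps.ne', mul_zero]
  rcases le_or_gt t 1 with h1 | h1
  · calc t ^ a ≤ t ^ eps := Real.rpow_le_rpow_of_exponent_ge h0 h1 ha1
    _ ≤ max (T ^ M) 1 * t ^ eps := by
        nlinarith [Real.rpow_nonneg ht eps, le_max_right (T ^ M) (1 : ℝ)]
  · have h2 : (1 : ℝ) ≤ t ^ eps := by
      calc (1:ℝ) = 1 ^ eps := (Real.one_rpow _).symm
      _ ≤ t ^ eps := Real.rpow_le_rpow zero_le_one h1.le heps.le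
    calc t ^ a ≤ T ^ a := Real.rpow_le_rpow ht htT (by linarith)
    _ ≤ T ^ M := Real.rpow_le_rpow_of_exponent_le (le_trans h1.le htT) ha2
    _ ≤ max (T ^ M) 1 * t ^ eps := by
        nlinarith [le_max_left (T ^ M) (1:ℝ), le_max_right (T ^ M) (1:ℝ)]

lemma rpow_var_exp_le_large {t r δ D a n : ℝ} (hr : 0 < r) (hrt : r ≤ t) (hδ : 0 < δ)
    (ha1 : δ ≤ a) (ha2 : a ≤ D) (hn : 0 ≤ n) :
    t ^ (-(n + a)) ≤ max (r ^ (δ - D)) 1 * t ^ (-(n + δ)) := by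
  have ht : 0 < t := lt_of_lt_of_le hr hrt
  have key : t ^ (-(n + a)) = t ^ (δ - a) * t ^ (-(n + δ)) := by
    rw [← Real.rpow_add ht]; ring_nf
  rw [key]
  have h2 : t ^ (δ - a) ≤ max (r ^ (δ - D)) 1 := by
    rcases le_or_gt 1 t with h1 | h1
    · exact le_trans (Real.rpow_le_one_of_one_le_of_nonpos h1 (by linarith))
        (le_max_right _ _)
    · calc t ^ (δ - a) ≤ r ^ (δ - a) :=
          Real.rpow_le_rpow_of_nonpos hr hrt (by linarith)
      _ ≤ r ^ (δ - D) :=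
          Real.rpow_le_rpow_of_exponent_ge hr (by linarith) (by linarith)
      _ ≤ max (r ^ (δ - D)) 1 := le_max_left _ _
  exact mul_le_mul_of_nonneg_right h2 (Real.rpow_nonneg ht.le _)

lemma rpow_neg_le_bracket {t r e : ℝ} (hr : 0 < r) (hrt : r ≤ t) (he : 0 ≤ e) :
    t ^ (-e) ≤ (1 + 1 / r) ^ e * (1 + t) ^ (-e) := by
  have ht : 0 < t := lt_of_lt_of_le hr hrt
  have hb : (0 : ℝ) < 1 + 1 / r := by positivity
  have h1 : 1 + t ≤ (1 + 1 / r) * t := by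
    have : (1 : ℝ) ≤ t / r := (one_le_div hr).mpr hrt
    have : (1 : ℝ) ≤ t * r⁻¹ := by rwa [div_eq_mul_inv] at this
    rw [add_mul, one_mul, one_div]; nlinarith
  calc t ^ (-e) = (1 + 1/r) ^ e * ((1 + 1/r) ^ (-e) * t ^ (-e)) := by
        rw [← mul_assoc, ← Real.rpow_add hb, add_neg_cancel, Real.rpow_zero, one_mul]
  _ = (1 + 1/r) ^ e * ((1 + 1/r) * t) ^ (-e) := by
        rw [Real.mul_rpow hb.le ht.le]
  _ ≤ (1 + 1/r) ^ e * (1 + t) ^ (-e) :=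
        mul_le_mul_of_nonneg_left
          (Real.rpow_le_rpow_of_nonpos (by positivity) h1 (by linarith))
          (Real.rpow_nonneg hb.le _)


lemma div_two_rpow_neg {u e : ℝ} (hu : 0 < u) : (u / 2) ^ (-e) = 2 ^ e * u ^ (-e) := by
  rw [Real.div_rpow hu.le (by norm_num : (0:ℝ) ≤ 2), Real.rpow_neg (by norm_num : (0:ℝ) ≤ 2) e,
    div_eq_mul_inv, inv_inv, mul_comm]

lemma finite_lintegral_rpow_ball (n : ℕ) {R ε : ℝ} (hR : 0 < R) (hε : 0 < ε) :
    ∫⁻ z : Rn n in ball 0 R, ENNReal.ofReal (‖z‖ ^ (ε - n)) < ⊤ := by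
  rcases Nat.eq_zero_or_pos n with hn0 | hn0
  · subst hn0
    have hz : ∀ z : Rn 0, ENNReal.ofReal (‖z‖ ^ (ε - (0:ℕ))) = 0 := by
      intro z
      have : z = 0 := Subsingleton.elim _ _
      simp [this, Real.zero_rpow (by simpa using hε.ne')]
    calc ∫⁻ z : Rn 0 in ball 0 R, ENNReal.ofReal (‖z‖ ^ (ε - (0:ℕ))) =
        ∫⁻ z : Rn 0 in ball 0 R, 0 := by simp_rw [hz]
    _ = 0 := lintegral_zero
    _ < ⊤ := by simp
  have : Nontrivial (Rn n) := by
    apply Module.nontrivial_of_finrank_pos (R := ℝ)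
    rw [finrank_euclideanSpace_fin]; exact hn0
  set f : Rn n → ℝ≥0∞ := fun z => ENNReal.ofReal (‖z‖ ^ (ε - n)) with hf
  set S : ℕ → Set (Rn n) := fun k => ball 0 (R / 2 ^ k) \ ball 0 (R / 2 ^ (k + 1)) with hS
  have hcover : ball (0 : Rn n) R ⊆ {0} ∪ ⋃ k, S k := by
    intro z hz
    by_cases hz0 : z = 0
    · exact Or.inl (by simp [hz0])
    right
    have hzpos : 0 < ‖z‖ := norm_pos_iff.mpr hz0
    have hex : ∃ k : ℕ, R / 2 ^ (k + 1) ≤ ‖z‖ := by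
      obtain ⟨k, hk⟩ := pow_unbounded_of_one_lt (R / ‖z‖) (one_lt_two (α := ℝ))
      refine ⟨k, ?_⟩
      rw [div_le_iff₀ (by positivity)]
      rw [div_lt_iff₀ hzpos] at hk
      have h2 : (2:ℝ) ^ k ≤ 2 ^ (k+1) :=
        pow_le_pow_right₀ one_le_two (Nat.le_succ k)
      nlinarith
    refine mem_iUnion.mpr ⟨Nat.find hex, ?_, ?_⟩
    · rw [mem_ball_zero_iff]
      rcases Nat.eq_zero_or_pos (Nat.find hex) with h0 | h0
      · rw [h0]; simpa using (mem_ball_zero_iff.mp hz)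
      · obtain ⟨m, hm⟩ := Nat.exists_eq_succ_of_ne_zero h0.ne'
        rw [hm]
        have := Nat.find_min hex (by omega : m < Nat.find hex)
        push_neg at this
        exact this
    · rw [mem_ball_zero_iff]
      exact not_lt.mpr (Nat.find_spec hex)
  have hq1 : (2:ℝ) ^ (-ε) < 1 := Real.rpow_lt_one_of_one_lt_of_neg one_lt_two (by linarith)
  have hterm : ∀ k : ℕ, ∫⁻ z in S k, f z ≤
      (ENNReal.ofReal (R ^ ε * 2 ^ (n:ℝ)) * volume (ball (0 : Rn n) 1)) *
        ENNReal.ofReal ((2:ℝ) ^ (-ε)) ^ k := by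
    intro k
    have hu : (0:ℝ) < R / 2 ^ k := by positivity
    have hu2 : (0:ℝ) < R / 2 ^ (k + 1) := by positivity
    have hpt : ∀ z ∈ S k, f z ≤
        ENNReal.ofReal ((R / 2 ^ k) ^ ε * (R / 2 ^ (k + 1)) ^ (-(n:ℝ))) := by
      rintro z ⟨h1, h2⟩
      rw [mem_ball_zero_iff] at h1
      rw [mem_ball_zero_iff] at h2; push_neg at h2
      have hz0 : 0 < ‖z‖ := lt_of_lt_of_le hu2 h2
      have hsplit : ‖z‖ ^ (ε - n) = ‖z‖ ^ ε * ‖z‖ ^ (-(n:ℝ)) := by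
        rw [← Real.rpow_add hz0]; ring_nf
      rw [hf]
      apply ENNReal.ofReal_le_ofReal
      rw [hsplit]
      exact mul_le_mul (Real.rpow_le_rpow (norm_nonneg z) h1.le hε.le)
        (Real.rpow_le_rpow_of_nonpos hu2 h2 (neg_nonpos.mpr (Nat.cast_nonneg n)))
        (Real.rpow_nonneg (norm_nonneg z) _) (Real.rpow_nonneg hu.le _)
    have halg : (R / 2 ^ k) ^ ε * (R / 2 ^ (k + 1)) ^ (-(n:ℝ)) *
        (R / 2 ^ k) ^ (Module.finrank ℝ (Rn n)) =
        R ^ ε * 2 ^ (n:ℝ) * ((2:ℝ) ^ (-ε)) ^ k := by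
      rw [finrank_euclideanSpace_fin]
      set u := R / 2 ^ k with hudef
      have he1 : R / 2 ^ (k + 1) = u / 2 := by
        rw [hudef, pow_succ]; field_simp
      have hun : (0:ℝ) < u ^ ((n:ℝ)) := Real.rpow_pos_of_pos hu _
      have h2n : (0:ℝ) < (2:ℝ) ^ ((n:ℝ)) := Real.rpow_pos_of_pos two_pos _
      have hA : (u / 2) ^ (-(n:ℝ)) = u ^ (-(n:ℝ)) * 2 ^ (n:ℝ) := by
        rw [Real.rpow_neg (by positivity), Real.div_rpow hu.le (by norm_num),
          Real.rpow_neg hu.le]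
        field_simp
      have hC : u ^ ε = R ^ ε * ((2:ℝ) ^ (-ε)) ^ k := by
        have h2k : ((2:ℝ) ^ k : ℝ) = (2:ℝ) ^ ((k:ℕ):ℝ) := (Real.rpow_natCast 2 k).symm
        rw [hudef, Real.div_rpow hR.le (by positivity), h2k,
          ← Real.rpow_natCast ((2:ℝ) ^ (-ε)) k,
          ← Real.rpow_mul (by norm_num : (0:ℝ) ≤ 2),
          ← Real.rpow_mul (by norm_num : (0:ℝ) ≤ 2),
          div_eq_mul_inv, ← Real.rpow_neg (by norm_num : (0:ℝ) ≤ 2)]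
        congr 1
        ring
      rw [he1, hA, ← Real.rpow_natCast u n,
        show u ^ ε * (u ^ (-(n:ℝ)) * 2 ^ (n:ℝ)) * u ^ ((n:ℕ):ℝ) =
          u ^ ε * 2 ^ (n:ℝ) * (u ^ (-(n:ℝ)) * u ^ ((n:ℕ):ℝ)) from by ring,
        ← Real.rpow_add hu, neg_add_cancel, Real.rpow_zero, mul_one, hC]
      ring
    calc ∫⁻ z in S k, f z ≤ ∫⁻ _ in S k,
        ENNReal.ofReal ((R / 2 ^ k) ^ ε * (R / 2 ^ (k + 1)) ^ (-(n:ℝ))) :=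
          setLIntegral_mono' (measurableSet_ball.diff measurableSet_ball) hpt
    _ = ENNReal.ofReal ((R / 2 ^ k) ^ ε * (R / 2 ^ (k + 1)) ^ (-(n:ℝ))) * volume (S k) :=
          setLIntegral_const _ _
    _ ≤ ENNReal.ofReal ((R / 2 ^ k) ^ ε * (R / 2 ^ (k + 1)) ^ (-(n:ℝ))) *
          volume (ball (0 : Rn n) (R / 2 ^ k)) :=
          mul_le_mul_right (measure_mono diff_subset) _
    _ = ENNReal.ofReal ((R / 2 ^ k) ^ ε * (R / 2 ^ (k + 1)) ^ (-(n:ℝ))) *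
          (ENNReal.ofReal ((R / 2 ^ k) ^ Module.finrank ℝ (Rn n)) *
            volume (ball (0 : Rn n) 1)) := by
          rw [Measure.addHaar_ball _ _ hu.le]
    _ = ENNReal.ofReal ((R / 2 ^ k) ^ ε * (R / 2 ^ (k + 1)) ^ (-(n:ℝ)) *
          (R / 2 ^ k) ^ Module.finrank ℝ (Rn n)) * volume (ball (0 : Rn n) 1) := by
          rw [← mul_assoc, ← ENNReal.ofReal_mul (by positivity)]
    _ = ENNReal.ofReal (R ^ ε * 2 ^ (n:ℝ) * ((2:ℝ) ^ (-ε)) ^ k) *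
          volume (ball (0 : Rn n) 1) := by rw [halg]
    _ = (ENNReal.ofReal (R ^ ε * 2 ^ (n:ℝ)) * volume (ball (0 : Rn n) 1)) *
          ENNReal.ofReal ((2:ℝ) ^ (-ε)) ^ k := by
          rw [ENNReal.ofReal_mul (by positivity), ENNReal.ofReal_pow (by positivity)]
          ring
  calc ∫⁻ z in ball (0 : Rn n) R, f z ≤ ∫⁻ z in {0} ∪ ⋃ k, S k, f z :=
        lintegral_mono_set hcover
  _ ≤ (∫⁻ z in {(0 : Rn n)}, f z) + ∫⁻ z in ⋃ k, S k, f z := lintegral_union_le _ _ _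
  _ ≤ (∫⁻ z in {(0 : Rn n)}, f z) + ∑' k, ∫⁻ z in S k, f z := by
        exact add_le_add le_rfl (lintegral_iUnion_le _ _)
  _ < ⊤ := by
      apply ENNReal.add_lt_top.mpr
      constructor
      · rw [lintegral_singleton]
        apply ENNReal.mul_lt_top
        · have hf0 : f 0 ≤ 1 := by
            simp only [hf, norm_zero]
            exact le_trans (ENNReal.ofReal_le_ofReal (Real.zero_rpow_le_one _)) (by simp)
          exact lt_of_le_of_lt hf0 ENNReal.one_lt_top
        · exact lt_of_le_of_lt (measure_mono (by simp [hR] : ({0} : Set (Rn n)) ⊆ ball 0 R))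
            measure_ball_lt_top
      · calc ∑' k, ∫⁻ z in S k, f z ≤
            ∑' k, (ENNReal.ofReal (R ^ ε * 2 ^ (n:ℝ)) * volume (ball (0 : Rn n) 1)) *
              ENNReal.ofReal ((2:ℝ) ^ (-ε)) ^ k := ENNReal.tsum_le_tsum hterm
        _ = (ENNReal.ofReal (R ^ ε * 2 ^ (n:ℝ)) * volume (ball (0 : Rn n) 1)) *
              ∑' k, ENNReal.ofReal ((2:ℝ) ^ (-ε)) ^ k := ENNReal.tsum_mul_left
        _ = (ENNReal.ofReal (R ^ ε * 2 ^ (n:ℝ)) * volume (ball (0 : Rn n) 1)) *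
              (1 - ENNReal.ofReal ((2:ℝ) ^ (-ε)))⁻¹ := by rw [ENNReal.tsum_geometric]
        _ < ⊤ := by
            apply ENNReal.mul_lt_top (ENNReal.mul_lt_top (by simp) measure_ball_lt_top)
            rw [ENNReal.inv_lt_top]
            exact tsub_pos_of_lt (ENNReal.ofReal_lt_one.mpr hq1)


set_option maxHeartbeats 1600000 in
/-- **Lemma `lemueta`.** For `v ∈ L^{p⁺}(B_{2r})` with finite modular on `B_{2r}` and a bounded
Lipschitz cut-off `η` vanishing outside `B_r`, the product `vη` (extended by `0` outside
`B_{2r}`) has finite modular over all of `ℝⁿ`, and lies in `𝕎^{s,p}(Ω)` for every bounded open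
`Ω ⊇ B_{2r}`. -/
theorem cutoff_product_finite_modular
    (n : ℕ) (s p : Rn n → Rn n → ℝ) (sm sps pm pp : ℝ)
    (hsp : StandingSP n s p sm sps pm pp)
    (x₀ : Rn n) (r : ℝ) (hr : 0 < r) (v η : Rn n → ℝ)
    (hvmeas : Measurable v)
    (hvLp : MemLp v (ENNReal.ofReal pp) (volume.restrict (ball x₀ (2 * r))))
    (hvmod : modular n s p v (ball x₀ (2 * r)) < ⊤)
    (L : ℝ≥0) (hηLip : LipschitzWith L η) (C : ℝ) (hηbdd : ∀ x, |η x| ≤ C)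
    (hη0 : ∀ x ∉ ball x₀ r, η x = 0) :
    modular n s p ((ball x₀ (2 * r)).indicator fun x => v x * η x) Set.univ < ⊤ ∧
    ∀ Ω : Set (Rn n), IsOpen Ω → Bornology.IsBounded Ω → ball x₀ (2 * r) ⊆ Ω →
      MemW n Ω s p ((ball x₀ (2 * r)).indicator fun x => v x * η x) := by
  classical
  have hC0 : 0 ≤ C := le_trans (abs_nonneg _) (hηbdd x₀)
  have pm_le : ∀ x y, pm ≤ p x y := fun x y => (hsp.p_bounds x y).1
  have p_le_pp : ∀ x y, p x y ≤ pp := fun x y => (hsp.p_bounds x y).2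
  have pm_pos : 0 < pm := lt_trans one_pos hsp.pm_gt_one
  have hpm_pp : pm ≤ pp := le_trans (pm_le x₀ x₀) (p_le_pp x₀ x₀)
  have pp_pos : 0 < pp := lt_of_lt_of_le pm_pos hpm_pp
  have p_pos : ∀ x y, 0 < p x y := fun x y => lt_of_lt_of_le pm_pos (pm_le x y)
  have sm_le : ∀ x y, sm ≤ s x y := fun x y => (hsp.s_bounds x y).1
  have s_le : ∀ x y, s x y ≤ sps := fun x y => (hsp.s_bounds x y).2
  have hsm_pos := hsp.sm_pos
  have hsps1 := hsp.sp_lt_one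
  have hsm_sps : sm ≤ sps := le_trans (sm_le x₀ x₀) (s_le x₀ x₀)
  have hsps_pos : 0 < sps := lt_of_lt_of_le hsm_pos hsm_sps
  have hsm1 : sm < 1 := lt_of_le_of_lt hsm_sps hsps1
  set B : Set (Rn n) := ball x₀ r with hB
  set B2 : Set (Rn n) := ball x₀ (2 * r) with hB2
  set w : Rn n → ℝ := B2.indicator (fun x => v x * η x) with hw
  have hBB2 : B ⊆ B2 := ball_subset_ball (by linarith)
  have hB2m : MeasurableSet B2 := measurableSet_ball
  set ε : ℝ := (1 - sps) * pm with hεdef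
  have hε : 0 < ε := mul_pos (by linarith) pm_pos
  set Mc : ℝ := (1 - sm) * pp with hMdef
  have hεM : ε ≤ Mc := mul_le_mul (by linarith) hpm_pp pm_pos.le (by linarith)
  set δ : ℝ := sm * pm with hδdef
  have hδ : 0 < δ := mul_pos hsm_pos pm_pos
  set D : ℝ := sps * pp with hDdef
  have hδD : δ ≤ D := mul_le_mul hsm_sps hpm_pp pm_pos.le hsps_pos.le
  have hsp_mem : ∀ x y, δ ≤ s x y * p x y ∧ s x y * p x y ≤ D := fun x y =>
    ⟨mul_le_mul (sm_le x y) (pm_le x y) pm_pos.le (hsm_pos.trans_le (sm_le x y)).le,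
     mul_le_mul (s_le x y) (p_le_pp x y) (p_pos x y).le hsps_pos.le⟩
  have h1sp_mem : ∀ x y, ε ≤ (1 - s x y) * p x y ∧ (1 - s x y) * p x y ≤ Mc := fun x y =>
    ⟨mul_le_mul (by linarith [s_le x y]) (pm_le x y) pm_pos.le (by linarith [s_le x y]),
     mul_le_mul (by linarith [sm_le x y]) (p_le_pp x y) (p_pos x y).le (by linarith)⟩
  -- cutoff facts
  have hw0 : ∀ x, x ∉ B → w x = 0 := by
    intro x hx
    by_cases hx2 : x ∈ B2
    · rw [hw, indicator_of_mem hx2, hη0 x hx, mul_zero]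
    · rw [hw, indicator_of_notMem hx2]
  have hwb : ∀ x, |w x| ≤ C * |v x| := by
    intro x
    by_cases hx2 : x ∈ B2
    · rw [hw, indicator_of_mem hx2, abs_mul, mul_comm]
      exact mul_le_mul_of_nonneg_right (hηbdd x) (abs_nonneg _)
    · rw [hw, indicator_of_notMem hx2, abs_zero]; positivity
  have hwd : ∀ x y, x ∈ B2 → y ∈ B2 →
      |w x - w y| ≤ C * |v x - v y| + (L : ℝ) * ‖x - y‖ * |v x| := by
    intro x y hx hy
    rw [hw, indicator_of_mem hx, indicator_of_mem hy]
    have key : v x * η x - v y * η y = η y * (v x - v y) + v x * (η x - η y) := by ring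
    rw [key]
    have h2 : |η x - η y| ≤ (L : ℝ) * ‖x - y‖ := by
      have := hηLip.dist_le_mul x y
      rwa [Real.dist_eq, dist_eq_norm] at this
    calc |η y * (v x - v y) + v x * (η x - η y)|
        ≤ |η y * (v x - v y)| + |v x * (η x - η y)| := abs_add_le _ _
    _ = |η y| * |v x - v y| + |v x| * |η x - η y| := by rw [abs_mul, abs_mul]
    _ ≤ C * |v x - v y| + |v x| * ((L : ℝ) * ‖x - y‖) := by
        have h1 := hηbdd y
        have h3 := abs_nonneg (v x - v y)
        have h4 := abs_nonneg (v x)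
        exact add_le_add (mul_le_mul_of_nonneg_right h1 h3)
          (mul_le_mul_of_nonneg_left h2 h4)
    _ = C * |v x - v y| + (L : ℝ) * ‖x - y‖ * |v x| := by ring
  have hwmeas : Measurable w := (hvmeas.mul hηLip.continuous.measurable).indicator hB2m
  -- integrability facts
  have hVpp : ∫⁻ x in B2, ENNReal.ofReal (|v x| ^ pp) < ⊤ := by
    have h1 : Integrable (fun x => ‖v x‖ ^ pp) (volume.restrict B2) := by
      have h2 := hvLp.integrable_norm_rpow
        (by simp [pp_pos] : ENNReal.ofReal pp ≠ 0) ENNReal.ofReal_ne_top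
      rwa [ENNReal.toReal_ofReal pp_pos.le] at h2
    have h3 := h1.lintegral_lt_top
    simpa [Real.norm_eq_abs] using h3
  set M₀ := ∫⁻ x in B2, ENNReal.ofReal (1 + |v x| ^ pp) with hM₀def
  have hvpm : ∀ x : Rn n, (0:ℝ) ≤ |v x| ^ pp := fun x => Real.rpow_nonneg (abs_nonneg _) _
  have hM₀ : M₀ < ⊤ := by
    rw [hM₀def]
    have heq : ∀ x : Rn n, ENNReal.ofReal (1 + |v x| ^ pp)
        = 1 + ENNReal.ofReal (|v x| ^ pp) := by
      intro x; rw [ENNReal.ofReal_add one_pos.le (hvpm x), ENNReal.ofReal_one]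
    simp_rw [heq]
    rw [lintegral_add_left measurable_const]
    refine ENNReal.add_lt_top.mpr ⟨?_, hVpp⟩
    simpa using (measure_ball_lt_top : volume B2 < ⊤)
  -- kernel integrals
  set c₁ := ∫⁻ z : Rn n in ball 0 (4 * r), ENNReal.ofReal (‖z‖ ^ (ε - n)) with hc₁def
  have hc₁ : c₁ < ⊤ := finite_lintegral_rpow_ball n (by linarith) hε
  set c₂ := ∫⁻ z : Rn n, ENNReal.ofReal ((1 + ‖z‖) ^ (-((n : ℝ) + δ))) with hc₂def
  have hc₂ : c₂ < ⊤ := by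
    rw [hc₂def]
    have hfr : ((Module.finrank ℝ (Rn n)) : ℝ) < (n : ℝ) + δ := by
      rw [finrank_euclideanSpace_fin]; linarith
    exact finite_integral_one_add_norm hfr
  have hc₂x : (∫⁻ y : Rn n, ENNReal.ofReal ((1 + ‖y - x₀‖) ^ (-((n : ℝ) + δ)))) = c₂ := by
    rw [hc₂def]
    exact lintegral_sub_right_eq_self
      (fun z => ENNReal.ofReal ((1 + ‖z‖) ^ (-((n : ℝ) + δ)))) x₀
  have hJ : ∀ x ∈ B2, (∫⁻ y in B2, ENNReal.ofReal (‖x - y‖ ^ (ε - n))) ≤ c₁ := by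
    intro x hx
    have hsub : B2 ⊆ ball x (4 * r) := by
      intro y hy
      rw [hB2, mem_ball] at hy
      rw [hB2, mem_ball] at hx
      rw [mem_ball]
      calc dist y x ≤ dist y x₀ + dist x₀ x := dist_triangle y x₀ x
      _ < 2 * r + 2 * r := add_lt_add hy (by rw [dist_comm]; exact hx)
      _ = 4 * r := by ring
    calc (∫⁻ y in B2, ENNReal.ofReal (‖x - y‖ ^ (ε - n)))
        ≤ ∫⁻ y in ball x (4 * r), ENNReal.ofReal (‖x - y‖ ^ (ε - n)) :=
          lintegral_mono_set hsub
    _ = ∫⁻ y, (ball x (4 * r)).indicator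
          (fun y => ENNReal.ofReal (‖x - y‖ ^ (ε - n))) y :=
          (lintegral_indicator measurableSet_ball _).symm
    _ = ∫⁻ y, (ball (0 : Rn n) (4 * r)).indicator
          (fun z => ENNReal.ofReal (‖z‖ ^ (ε - n))) (y - x) := by
        apply lintegral_congr
        intro y
        by_cases hy : y ∈ ball x (4 * r)
        · rw [indicator_of_mem hy,
            indicator_of_mem (by rwa [mem_ball_zero_iff, ← mem_ball_iff_norm]),
            norm_sub_rev]
        · rw [indicator_of_notMem hy,
            indicator_of_notMem (by rwa [mem_ball_zero_iff, ← mem_ball_iff_norm])]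
    _ = ∫⁻ z, (ball (0 : Rn n) (4 * r)).indicator
          (fun z => ENNReal.ofReal (‖z‖ ^ (ε - n))) z :=
          lintegral_sub_right_eq_self _ x
    _ = c₁ := by rw [hc₁def, lintegral_indicator measurableSet_ball]
  -- constants
  set C₁ : ℝ := max C 1 with hC₁def
  set L₁ : ℝ := max (L : ℝ) 1 with hL₁def
  have hC₁1 : (1:ℝ) ≤ C₁ := le_max_right _ _
  have hL₁1 : (1:ℝ) ≤ L₁ := le_max_right _ _
  set K₁ : ℝ := max ((4 * r) ^ Mc) 1 with hK₁def
  have hK₁1 : (1:ℝ) ≤ K₁ := le_max_right _ _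
  set K₂ : ℝ := max (r ^ (δ - D)) 1 with hK₂def
  have hK₂1 : (1:ℝ) ≤ K₂ := le_max_right _ _
  set CP : ℝ := max (C ^ pp) 1 with hCPdef
  have hCP1 : (1:ℝ) ≤ CP := le_max_right _ _
  set Ka : ℝ := 2 ^ pp * C₁ ^ pp with hKadef
  have hKa0 : 0 ≤ Ka := by
    have := Real.rpow_nonneg (by norm_num : (0:ℝ) ≤ 2) pp
    have := Real.rpow_nonneg (by linarith : (0:ℝ) ≤ C₁) pp
    positivity
  set Kb : ℝ := 2 ^ pp * L₁ ^ pp * K₁ with hKbdef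
  have hKb0 : 0 ≤ Kb := by
    have h1 := Real.rpow_nonneg (by norm_num : (0:ℝ) ≤ 2) pp
    have h2 := Real.rpow_nonneg (by linarith : (0:ℝ) ≤ L₁) pp
    have h3 : (0:ℝ) ≤ K₁ := by linarith
    positivity
  set Kd : ℝ := CP * K₂ * 2 ^ ((n : ℝ) + δ) with hKddef
  have hKd0 : 0 ≤ Kd := by
    have h1 : (0:ℝ) ≤ CP := by linarith
    have h2 : (0:ℝ) ≤ K₂ := by linarith
    have h3 := Real.rpow_nonneg (by norm_num : (0:ℝ) ≤ 2) ((n : ℝ) + δ)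
    positivity
  set Kc : ℝ := Kd * (1 + 1 / (2 * r)) ^ ((n : ℝ) + δ) with hKcdef
  have hKc0 : 0 ≤ Kc := by
    have h1 := Real.rpow_nonneg (by positivity : (0:ℝ) ≤ 1 + 1 / (2 * r)) ((n : ℝ) + δ)
    positivity
  set Ke : ℝ := max Kb Kc with hKedef
  have hKe0 : 0 ≤ Ke := le_trans hKb0 (le_max_left _ _)
  -- numerator bound in far regions
  have hnum : ∀ (a : Rn n) (x y : Rn n), |w a| ^ p x y ≤ CP * (1 + |v a| ^ pp) := by
    intro a x y
    calc |w a| ^ p x y ≤ 1 + |w a| ^ pp :=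
        rpow_le_one_add_rpow (abs_nonneg _) (p_pos x y).le (p_le_pp x y)
    _ ≤ 1 + C ^ pp * |v a| ^ pp := by
        have h1 : |w a| ^ pp ≤ (C * |v a|) ^ pp :=
          Real.rpow_le_rpow (abs_nonneg _) (hwb a) pp_pos.le
        rw [Real.mul_rpow hC0 (abs_nonneg _)] at h1
        linarith
    _ ≤ CP * (1 + |v a| ^ pp) := by
        have h3 : C ^ pp ≤ CP := le_max_left _ _
        have h5 := hvpm a
        have h6 : C ^ pp * (|v a| ^ pp) ≤ CP * (|v a| ^ pp) :=
          mul_le_mul_of_nonneg_right h3 h5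
        have h7 : CP * (1 + |v a| ^ pp) = CP + CP * |v a| ^ pp := by ring
        linarith
  -- denominator bound in far regions
  have hden : ∀ (t u : ℝ) (x y : Rn n), r ≤ t → u / 2 ≤ t → 2 * r ≤ u →
      t ^ (-((n : ℝ) + s x y * p x y)) ≤ K₂ * 2 ^ ((n : ℝ) + δ) * u ^ (-((n : ℝ) + δ)) := by
    intro t u x y h1 h2 h3
    have ht : 0 < t := lt_of_lt_of_le hr h1
    have hu : 0 < u := by linarith
    have hu2 : 0 < u / 2 := by linarith
    calc t ^ (-((n : ℝ) + s x y * p x y)) ≤ K₂ * t ^ (-((n : ℝ) + δ)) :=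
        rpow_var_exp_le_large hr h1 hδ (hsp_mem x y).1 (hsp_mem x y).2 (Nat.cast_nonneg n)
    _ ≤ K₂ * ((u / 2) ^ (-((n : ℝ) + δ))) := by
        refine mul_le_mul_of_nonneg_left ?_ (by linarith)
        exact Real.rpow_le_rpow_of_nonpos hu2 h2
          (neg_nonpos.mpr (by positivity))
    _ = K₂ * (2 ^ ((n : ℝ) + δ) * u ^ (-((n : ℝ) + δ))) := by
        rw [div_two_rpow_neg hu]
    _ = K₂ * 2 ^ ((n : ℝ) + δ) * u ^ (-((n : ℝ) + δ)) := by ring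
  -- the global integrand
  set F : Rn n → Rn n → ℝ≥0∞ := fun x y =>
    ENNReal.ofReal (|w x - w y| ^ p x y / ‖x - y‖ ^ ((n : ℝ) + s x y * p x y)) with hF
  have hFdiag : ∀ x, F x x = 0 := by
    intro x
    rw [hF]
    simp [Real.zero_rpow (p_pos x x).ne']
  have hFzero : ∀ x y, w x = 0 → w y = 0 → F x y = 0 := by
    intro x y h1 h2
    rw [hF]
    simp only [h1, h2, sub_zero, abs_zero]
    rw [Real.zero_rpow (p_pos x y).ne', zero_div, ENNReal.ofReal_zero]
  -- measurability of slices
  have hpm_y : ∀ x, Measurable (fun y => p x y) :=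
    fun x => hsp.p_meas.comp measurable_prodMk_left
  have hsm_y : ∀ x, Measurable (fun y => s x y) :=
    fun x => hsp.s_meas.comp measurable_prodMk_left
  -- MAIN FINITENESS
  have hmain : (∫⁻ x, ∫⁻ y, F x y) < ⊤ := by
    have h2pp : (0:ℝ) ≤ 2 ^ pp := Real.rpow_nonneg (by norm_num) _
    have hL₁pp : (0:ℝ) ≤ L₁ ^ pp := Real.rpow_nonneg (by linarith) _
    have hC₁pp : (0:ℝ) ≤ C₁ ^ pp := Real.rpow_nonneg (by linarith) _
    have hCP0 : (0:ℝ) ≤ CP := by linarith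
    have hK₂0 : (0:ℝ) ≤ K₂ := by linarith
    have h2nd : (0:ℝ) ≤ 2 ^ ((n:ℝ) + δ) := Real.rpow_nonneg (by norm_num) _
    have hnd0 : (0:ℝ) ≤ (n:ℝ) + δ := by positivity
    -- Region 1 : x ∈ B2
    have hinner1 : ∀ x ∈ B2, (∫⁻ y, F x y) ≤
        ENNReal.ofReal Ka * (∫⁻ y in B2, ENNReal.ofReal
          (|v x - v y| ^ p x y / ‖x - y‖ ^ ((n : ℝ) + s x y * p x y))) +
        (c₁ + c₂) * ENNReal.ofReal (Ke * (1 + |v x| ^ pp)) := by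
      intro x hx
      have h1a : (0:ℝ) ≤ 1 + |v x| ^ pp := by linarith [hvpm x]
      have hpt1 : ∀ y ∈ B2, F x y ≤
          ENNReal.ofReal (Ka * (|v x - v y| ^ p x y /
            ‖x - y‖ ^ ((n : ℝ) + s x y * p x y))) +
          ENNReal.ofReal ((Kb * (1 + |v x| ^ pp)) * ‖x - y‖ ^ (ε - n)) := by
        intro y hy
        by_cases hxy : x = y
        · rw [hxy, hFdiag]; exact zero_le
        have ht : 0 < ‖x - y‖ := by rw [norm_pos_iff]; exact sub_ne_zero.mpr hxy
        have htlt : ‖x - y‖ ≤ 4 * r := by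
          rw [hB2, mem_ball] at hx hy
          rw [← dist_eq_norm]
          have hd : dist x y ≤ dist x x₀ + dist x₀ y := dist_triangle x x₀ y
          have hd2 : dist x₀ y < 2 * r := by rw [dist_comm]; exact hy
          linarith
        have htE : 0 < ‖x - y‖ ^ ((n : ℝ) + s x y * p x y) := Real.rpow_pos_of_pos ht _
        have tp0 : 0 ≤ ‖x - y‖ ^ p x y := Real.rpow_nonneg (norm_nonneg _) _
        have dv0 : 0 ≤ |v x - v y| ^ p x y := Real.rpow_nonneg (abs_nonneg _) _
        have vx0 : 0 ≤ |v x| ^ p x y := Real.rpow_nonneg (abs_nonneg _) _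
        have hstep1 : |w x - w y| ^ p x y ≤
            Ka * |v x - v y| ^ p x y +
            (2 ^ pp * L₁ ^ pp) * (1 + |v x| ^ pp) * ‖x - y‖ ^ p x y := by
          have hd := hwd x y hx hy
          have h0 : |w x - w y| ^ p x y ≤
              (C * |v x - v y| + (L : ℝ) * ‖x - y‖ * |v x|) ^ p x y :=
            Real.rpow_le_rpow (abs_nonneg _) hd (p_pos x y).le
          have h1 : (C * |v x - v y| + (L : ℝ) * ‖x - y‖ * |v x|) ^ p x y ≤
              2 ^ p x y * ((C * |v x - v y|) ^ p x y +
                ((L : ℝ) * ‖x - y‖ * |v x|) ^ p x y) :=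
            add_rpow_le' (by positivity) (by positivity) (p_pos x y).le
          have e1 : (C * |v x - v y|) ^ p x y = C ^ p x y * |v x - v y| ^ p x y :=
            Real.mul_rpow hC0 (abs_nonneg _)
          have e2 : ((L : ℝ) * ‖x - y‖ * |v x|) ^ p x y =
              (L : ℝ) ^ p x y * ‖x - y‖ ^ p x y * |v x| ^ p x y := by
            rw [Real.mul_rpow (by positivity) (abs_nonneg _),
              Real.mul_rpow (L.coe_nonneg) (norm_nonneg _)]
          have hc1 : (2 : ℝ) ^ p x y ≤ 2 ^ pp :=
            Real.rpow_le_rpow_of_exponent_le one_le_two (p_le_pp x y)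
          have hc2 : C ^ p x y ≤ C₁ ^ pp :=
            le_trans (Real.rpow_le_rpow hC0 (le_max_left C 1) (p_pos x y).le)
              (Real.rpow_le_rpow_of_exponent_le hC₁1 (p_le_pp x y))
          have hc3 : (L : ℝ) ^ p x y ≤ L₁ ^ pp :=
            le_trans (Real.rpow_le_rpow L.coe_nonneg (le_max_left _ 1) (p_pos x y).le)
              (Real.rpow_le_rpow_of_exponent_le hL₁1 (p_le_pp x y))
          have hvx : |v x| ^ p x y ≤ 1 + |v x| ^ pp :=
            rpow_le_one_add_rpow (abs_nonneg _) (p_pos x y).le (p_le_pp x y)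
          calc |w x - w y| ^ p x y
              ≤ 2 ^ p x y * ((C * |v x - v y|) ^ p x y +
                  ((L : ℝ) * ‖x - y‖ * |v x|) ^ p x y) := le_trans h0 h1
          _ = 2 ^ p x y * (C ^ p x y * |v x - v y| ^ p x y) +
              2 ^ p x y * ((L : ℝ) ^ p x y * ‖x - y‖ ^ p x y * |v x| ^ p x y) := by
              rw [e1, e2]; ring
          _ ≤ 2 ^ pp * (C₁ ^ pp * |v x - v y| ^ p x y) +
              2 ^ pp * (L₁ ^ pp * ‖x - y‖ ^ p x y * (1 + |v x| ^ pp)) := by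
              refine add_le_add ?_ ?_
              · exact mul_le_mul hc1 (mul_le_mul_of_nonneg_right hc2 dv0)
                  (mul_nonneg (Real.rpow_nonneg hC0 _) dv0) h2pp
              · refine mul_le_mul hc1 ?_
                  (mul_nonneg (mul_nonneg (Real.rpow_nonneg L.coe_nonneg _) tp0) vx0) h2pp
                exact mul_le_mul (mul_le_mul_of_nonneg_right hc3 tp0) hvx vx0
                  (mul_nonneg hL₁pp tp0)
          _ = Ka * |v x - v y| ^ p x y +
              (2 ^ pp * L₁ ^ pp) * (1 + |v x| ^ pp) * ‖x - y‖ ^ p x y := by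
              rw [hKadef]; ring
        have hp1 : ‖x - y‖ ^ p x y / ‖x - y‖ ^ ((n:ℝ) + s x y * p x y) =
            ‖x - y‖ ^ ((1 - s x y) * p x y) * ‖x - y‖ ^ (-(n:ℝ)) := by
          rw [← Real.rpow_sub ht, ← Real.rpow_add ht]
          congr 1; ring
        have hsmall : ‖x - y‖ ^ ((1 - s x y) * p x y) ≤ K₁ * ‖x - y‖ ^ ε :=
          rpow_var_exp_le_small (norm_nonneg _) htlt hε (h1sp_mem x y).1 (h1sp_mem x y).2
        have htn0 : 0 ≤ ‖x - y‖ ^ (-(n:ℝ)) := Real.rpow_nonneg (norm_nonneg _) _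
        have hεn : ‖x - y‖ ^ ε * ‖x - y‖ ^ (-(n:ℝ)) = ‖x - y‖ ^ (ε - n) := by
          rw [show ε - (n:ℝ) = ε + -(n:ℝ) from by ring, ← Real.rpow_add ht]
        have hprod : |w x - w y| ^ p x y / ‖x - y‖ ^ ((n:ℝ) + s x y * p x y) ≤
            Ka * (|v x - v y| ^ p x y / ‖x - y‖ ^ ((n:ℝ) + s x y * p x y)) +
            (Kb * (1 + |v x| ^ pp)) * ‖x - y‖ ^ (ε - n) := by
          have hdivle : |w x - w y| ^ p x y / ‖x - y‖ ^ ((n:ℝ) + s x y * p x y) ≤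
              (Ka * |v x - v y| ^ p x y +
                (2 ^ pp * L₁ ^ pp) * (1 + |v x| ^ pp) * ‖x - y‖ ^ p x y) /
              ‖x - y‖ ^ ((n:ℝ) + s x y * p x y) := by gcongr
          refine le_trans hdivle ?_
          rw [add_div, mul_div_assoc, mul_div_assoc, hp1]
          refine add_le_add le_rfl ?_
          calc (2 ^ pp * L₁ ^ pp) * (1 + |v x| ^ pp) *
              (‖x - y‖ ^ ((1 - s x y) * p x y) * ‖x - y‖ ^ (-(n:ℝ)))
              ≤ (2 ^ pp * L₁ ^ pp) * (1 + |v x| ^ pp) *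
                ((K₁ * ‖x - y‖ ^ ε) * ‖x - y‖ ^ (-(n:ℝ))) := by
                refine mul_le_mul_of_nonneg_left
                  (mul_le_mul_of_nonneg_right hsmall htn0) ?_
                exact mul_nonneg (mul_nonneg h2pp hL₁pp) h1a
          _ = (Kb * (1 + |v x| ^ pp)) * (‖x - y‖ ^ ε * ‖x - y‖ ^ (-(n:ℝ))) := by
              rw [hKbdef]; ring
          _ = (Kb * (1 + |v x| ^ pp)) * ‖x - y‖ ^ (ε - n) := by rw [hεn]
        calc F x y = ENNReal.ofReal (|w x - w y| ^ p x y /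
            ‖x - y‖ ^ ((n : ℝ) + s x y * p x y)) := by simp only [hF]
        _ ≤ ENNReal.ofReal (Ka * (|v x - v y| ^ p x y /
              ‖x - y‖ ^ ((n:ℝ) + s x y * p x y)) +
            (Kb * (1 + |v x| ^ pp)) * ‖x - y‖ ^ (ε - n)) :=
            ENNReal.ofReal_le_ofReal hprod
        _ ≤ _ := ENNReal.ofReal_add_le
      have hKbx0 : (0:ℝ) ≤ Kb * (1 + |v x| ^ pp) := mul_nonneg hKb0 h1a
      have hmeas2 : Measurable (fun y : Rn n =>
          ENNReal.ofReal ((Kb * (1 + |v x| ^ pp)) * ‖x - y‖ ^ (ε - n))) :=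
        ENNReal.measurable_ofReal.comp (measurable_const.mul
          (((measurable_const.sub measurable_id).norm).pow measurable_const))
      have hint1 : (∫⁻ y in B2, F x y) ≤
          ENNReal.ofReal Ka * (∫⁻ y in B2, ENNReal.ofReal
            (|v x - v y| ^ p x y / ‖x - y‖ ^ ((n : ℝ) + s x y * p x y))) +
          ENNReal.ofReal (Kb * (1 + |v x| ^ pp)) * c₁ := by
        calc (∫⁻ y in B2, F x y) ≤ ∫⁻ y in B2,
            (ENNReal.ofReal (Ka * (|v x - v y| ^ p x y /
              ‖x - y‖ ^ ((n : ℝ) + s x y * p x y))) +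
             ENNReal.ofReal ((Kb * (1 + |v x| ^ pp)) * ‖x - y‖ ^ (ε - n))) :=
            setLIntegral_mono' hB2m hpt1
        _ = (∫⁻ y in B2, ENNReal.ofReal (Ka * (|v x - v y| ^ p x y /
              ‖x - y‖ ^ ((n : ℝ) + s x y * p x y)))) +
            (∫⁻ y in B2, ENNReal.ofReal ((Kb * (1 + |v x| ^ pp)) * ‖x - y‖ ^ (ε - n))) :=
            lintegral_add_right _ hmeas2
        _ = ENNReal.ofReal Ka * (∫⁻ y in B2, ENNReal.ofReal
              (|v x - v y| ^ p x y / ‖x - y‖ ^ ((n : ℝ) + s x y * p x y))) +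
            ENNReal.ofReal (Kb * (1 + |v x| ^ pp)) *
              (∫⁻ y in B2, ENNReal.ofReal (‖x - y‖ ^ (ε - n))) := by
            simp_rw [ENNReal.ofReal_mul hKa0, ENNReal.ofReal_mul hKbx0]
            rw [lintegral_const_mul' _ _ ENNReal.ofReal_ne_top,
              lintegral_const_mul' _ _ ENNReal.ofReal_ne_top]
        _ ≤ _ := add_le_add le_rfl (mul_le_mul_right (hJ x hx) _)
      have hpt2 : ∀ y ∈ B2ᶜ, F x y ≤
          ENNReal.ofReal ((Kc * (1 + |v x| ^ pp)) * (1 + ‖y - x₀‖) ^ (-((n:ℝ) + δ))) := by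
        intro y hy
        have hwy : w y = 0 := hw0 y (fun h => hy (hBB2 h))
        by_cases hxB : x ∈ B
        · have hyx₀ : 2 * r ≤ ‖y - x₀‖ := by
            have h1 : ¬ dist y x₀ < 2 * r := fun h => hy (mem_ball.mpr h)
            rw [dist_eq_norm] at h1; linarith [not_lt.mp h1]
          have hxx : ‖x - x₀‖ < r := by rw [← dist_eq_norm]; exact mem_ball.mp hxB
          have htri : ‖y - x₀‖ ≤ ‖y - x‖ + ‖x - x₀‖ := by
            have h := norm_add_le (y - x) (x - x₀); rwa [sub_add_sub_cancel] at h
          have hyx : ‖y - x‖ = ‖x - y‖ := norm_sub_rev y x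
          have ht1 : r ≤ ‖x - y‖ := by linarith
          have ht2 : ‖y - x₀‖ / 2 ≤ ‖x - y‖ := by linarith
          have hFeq : F x y = ENNReal.ofReal (|w x| ^ p x y *
              ‖x - y‖ ^ (-((n:ℝ) + s x y * p x y))) := by
            simp only [hF, hwy, sub_zero]
            rw [Real.rpow_neg (norm_nonneg _) ((n:ℝ) + s x y * p x y), div_eq_mul_inv]
          rw [hFeq]
          apply ENNReal.ofReal_le_ofReal
          have h1 := hnum x x y
          have h2 := hden (‖x - y‖) (‖y - x₀‖) x y ht1 ht2 hyx₀
          have hbr := rpow_neg_le_bracket (show (0:ℝ) < 2 * r by linarith) hyx₀ hnd0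
          calc |w x| ^ p x y * ‖x - y‖ ^ (-((n:ℝ) + s x y * p x y)) ≤
              (CP * (1 + |v x| ^ pp)) *
                (K₂ * 2 ^ ((n:ℝ) + δ) * ‖y - x₀‖ ^ (-((n:ℝ) + δ))) :=
              mul_le_mul h1 h2 (Real.rpow_nonneg (norm_nonneg _) _)
                (mul_nonneg hCP0 h1a)
          _ ≤ (CP * (1 + |v x| ^ pp)) * (K₂ * 2 ^ ((n:ℝ) + δ) *
                ((1 + 1 / (2 * r)) ^ ((n:ℝ) + δ) * (1 + ‖y - x₀‖) ^ (-((n:ℝ) + δ)))) := by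
              refine mul_le_mul_of_nonneg_left ?_ (mul_nonneg hCP0 h1a)
              refine mul_le_mul_of_nonneg_left hbr (mul_nonneg hK₂0 h2nd)
          _ = (Kc * (1 + |v x| ^ pp)) * (1 + ‖y - x₀‖) ^ (-((n:ℝ) + δ)) := by
              rw [hKcdef, hKddef]; ring
        · rw [hFzero x y (hw0 x hxB) hwy]; exact zero_le
      have hKcx0 : (0:ℝ) ≤ Kc * (1 + |v x| ^ pp) := mul_nonneg hKc0 h1a
      have hint2 : (∫⁻ y in B2ᶜ, F x y) ≤ ENNReal.ofReal (Kc * (1 + |v x| ^ pp)) * c₂ := by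
        calc (∫⁻ y in B2ᶜ, F x y) ≤ ∫⁻ y in B2ᶜ,
            ENNReal.ofReal ((Kc * (1 + |v x| ^ pp)) * (1 + ‖y - x₀‖) ^ (-((n:ℝ) + δ))) :=
            setLIntegral_mono' hB2m.compl hpt2
        _ = ENNReal.ofReal (Kc * (1 + |v x| ^ pp)) *
            ∫⁻ y in B2ᶜ, ENNReal.ofReal ((1 + ‖y - x₀‖) ^ (-((n:ℝ) + δ))) := by
            simp_rw [ENNReal.ofReal_mul hKcx0]
            exact lintegral_const_mul' _ _ ENNReal.ofReal_ne_top
        _ ≤ _ := by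
            refine mul_le_mul_right ?_ _
            rw [← hc₂x]; exact setLIntegral_le_lintegral _ _
      calc (∫⁻ y, F x y) = (∫⁻ y in B2, F x y) + ∫⁻ y in B2ᶜ, F x y :=
          (lintegral_add_compl (F x) hB2m).symm
      _ ≤ (ENNReal.ofReal Ka * (∫⁻ y in B2, ENNReal.ofReal
            (|v x - v y| ^ p x y / ‖x - y‖ ^ ((n : ℝ) + s x y * p x y))) +
          ENNReal.ofReal (Kb * (1 + |v x| ^ pp)) * c₁) +
          ENNReal.ofReal (Kc * (1 + |v x| ^ pp)) * c₂ := add_le_add hint1 hint2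
      _ ≤ _ := by
          rw [add_assoc]
          refine add_le_add le_rfl ?_
          have hKb' : ENNReal.ofReal (Kb * (1 + |v x| ^ pp)) ≤
              ENNReal.ofReal (Ke * (1 + |v x| ^ pp)) :=
            ENNReal.ofReal_le_ofReal (mul_le_mul_of_nonneg_right (le_max_left _ _) h1a)
          have hKc' : ENNReal.ofReal (Kc * (1 + |v x| ^ pp)) ≤
              ENNReal.ofReal (Ke * (1 + |v x| ^ pp)) :=
            ENNReal.ofReal_le_ofReal (mul_le_mul_of_nonneg_right (le_max_right _ _) h1a)
          calc ENNReal.ofReal (Kb * (1 + |v x| ^ pp)) * c₁ +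
              ENNReal.ofReal (Kc * (1 + |v x| ^ pp)) * c₂ ≤
              ENNReal.ofReal (Ke * (1 + |v x| ^ pp)) * c₁ +
              ENNReal.ofReal (Ke * (1 + |v x| ^ pp)) * c₂ :=
              add_le_add (mul_le_mul_left hKb' _) (mul_le_mul_left hKc' _)
          _ = (c₁ + c₂) * ENNReal.ofReal (Ke * (1 + |v x| ^ pp)) := by ring
    have houter1 : (∫⁻ x in B2, ∫⁻ y, F x y) < ⊤ := by
      have hgmeas : Measurable (fun x : Rn n =>
          (c₁ + c₂) * ENNReal.ofReal (Ke * (1 + |v x| ^ pp))) :=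
        measurable_const.mul (ENNReal.measurable_ofReal.comp (measurable_const.mul
          (measurable_const.add ((hvmeas.abs).pow measurable_const))))
      have hIv : (∫⁻ x in B2, ∫⁻ y in B2, ENNReal.ofReal
          (|v x - v y| ^ p x y / ‖x - y‖ ^ ((n : ℝ) + s x y * p x y))) =
          modular n s p v B2 := rfl
      calc (∫⁻ x in B2, ∫⁻ y, F x y) ≤
          ∫⁻ x in B2, (ENNReal.ofReal Ka * (∫⁻ y in B2, ENNReal.ofReal
            (|v x - v y| ^ p x y / ‖x - y‖ ^ ((n : ℝ) + s x y * p x y))) +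
          (c₁ + c₂) * ENNReal.ofReal (Ke * (1 + |v x| ^ pp))) :=
          setLIntegral_mono' hB2m hinner1
      _ = (∫⁻ x in B2, ENNReal.ofReal Ka * (∫⁻ y in B2, ENNReal.ofReal
            (|v x - v y| ^ p x y / ‖x - y‖ ^ ((n : ℝ) + s x y * p x y)))) +
          (∫⁻ x in B2, (c₁ + c₂) * ENNReal.ofReal (Ke * (1 + |v x| ^ pp))) :=
          lintegral_add_right _ hgmeas
      _ = ENNReal.ofReal Ka * modular n s p v B2 +
          (c₁ + c₂) * (ENNReal.ofReal Ke * M₀) := by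
          rw [lintegral_const_mul' _ _ ENNReal.ofReal_ne_top,
            lintegral_const_mul' _ _ (ENNReal.add_lt_top.mpr ⟨hc₁, hc₂⟩).ne, hIv]
          congr 1
          congr 1
          simp_rw [ENNReal.ofReal_mul hKe0]
          rw [lintegral_const_mul' _ _ ENNReal.ofReal_ne_top, hM₀def]
      _ < ⊤ := by
          refine ENNReal.add_lt_top.mpr ⟨ENNReal.mul_lt_top ENNReal.ofReal_lt_top hvmod,
            ENNReal.mul_lt_top (ENNReal.add_lt_top.mpr ⟨hc₁, hc₂⟩)
              (ENNReal.mul_lt_top ENNReal.ofReal_lt_top hM₀)⟩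
    -- Region 2 : x ∉ B2
    have hinner2 : ∀ x ∈ B2ᶜ, (∫⁻ y, F x y) ≤
        (M₀ * ENNReal.ofReal Kc) * ENNReal.ofReal ((1 + ‖x - x₀‖) ^ (-((n:ℝ) + δ))) := by
      intro x hx
      have hxx₀ : 2 * r ≤ ‖x - x₀‖ := by
        have h1 : ¬ dist x x₀ < 2 * r := fun h => hx (mem_ball.mpr h)
        rw [dist_eq_norm] at h1; linarith [not_lt.mp h1]
      have hwx : w x = 0 := hw0 x (fun h => hx (hBB2 h))
      have hKdu0 : (0:ℝ) ≤ Kd * ‖x - x₀‖ ^ (-((n:ℝ) + δ)) :=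
        mul_nonneg hKd0 (Real.rpow_nonneg (norm_nonneg _) _)
      have hzero : (∫⁻ y in B2ᶜ, F x y) = 0 := by
        have hz : ∀ y ∈ B2ᶜ, F x y = 0 :=
          fun y hy => hFzero x y hwx (hw0 y fun h => hy (hBB2 h))
        rw [setLIntegral_congr_fun hB2m.compl hz, lintegral_zero]
      have hpt3 : ∀ y ∈ B2, F x y ≤ ENNReal.ofReal
          ((Kd * ‖x - x₀‖ ^ (-((n:ℝ) + δ))) * (1 + |v y| ^ pp)) := by
        intro y hy
        by_cases hyB : y ∈ B
        · have hyx₀ : ‖y - x₀‖ < r := by rw [← dist_eq_norm]; exact mem_ball.mp hyB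
          have htri : ‖x - x₀‖ ≤ ‖x - y‖ + ‖y - x₀‖ := by
            have h := norm_add_le (x - y) (y - x₀); rwa [sub_add_sub_cancel] at h
          have ht1 : r ≤ ‖x - y‖ := by linarith
          have ht2 : ‖x - x₀‖ / 2 ≤ ‖x - y‖ := by linarith
          have hFeq : F x y = ENNReal.ofReal (|w y| ^ p x y *
              ‖x - y‖ ^ (-((n:ℝ) + s x y * p x y))) := by
            simp only [hF, hwx, zero_sub, abs_neg]
            rw [Real.rpow_neg (norm_nonneg _) ((n:ℝ) + s x y * p x y), div_eq_mul_inv]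
          rw [hFeq]
          apply ENNReal.ofReal_le_ofReal
          have h1 := hnum y x y
          have h2 := hden (‖x - y‖) (‖x - x₀‖) x y ht1 ht2 hxx₀
          have h1b : (0:ℝ) ≤ 1 + |v y| ^ pp := by linarith [hvpm y]
          calc |w y| ^ p x y * ‖x - y‖ ^ (-((n:ℝ) + s x y * p x y)) ≤
              (CP * (1 + |v y| ^ pp)) *
                (K₂ * 2 ^ ((n:ℝ) + δ) * ‖x - x₀‖ ^ (-((n:ℝ) + δ))) :=
              mul_le_mul h1 h2 (Real.rpow_nonneg (norm_nonneg _) _)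
                (mul_nonneg hCP0 h1b)
          _ = (Kd * ‖x - x₀‖ ^ (-((n:ℝ) + δ))) * (1 + |v y| ^ pp) := by
              rw [hKddef]; ring
        · rw [hFzero x y hwx (hw0 y hyB)]; exact zero_le
      have hbr := rpow_neg_le_bracket (show (0:ℝ) < 2 * r by linarith) hxx₀ hnd0
      calc (∫⁻ y, F x y) = (∫⁻ y in B2, F x y) + ∫⁻ y in B2ᶜ, F x y :=
          (lintegral_add_compl (F x) hB2m).symm
      _ = (∫⁻ y in B2, F x y) := by rw [hzero, add_zero]
      _ ≤ ∫⁻ y in B2, ENNReal.ofReal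
            ((Kd * ‖x - x₀‖ ^ (-((n:ℝ) + δ))) * (1 + |v y| ^ pp)) :=
          setLIntegral_mono' hB2m hpt3
      _ = ENNReal.ofReal (Kd * ‖x - x₀‖ ^ (-((n:ℝ) + δ))) * M₀ := by
          simp_rw [ENNReal.ofReal_mul hKdu0]
          rw [lintegral_const_mul' _ _ ENNReal.ofReal_ne_top, hM₀def]
      _ ≤ (M₀ * ENNReal.ofReal Kc) * ENNReal.ofReal ((1 + ‖x - x₀‖) ^ (-((n:ℝ) + δ))) := by
          have hre : Kd * ‖x - x₀‖ ^ (-((n:ℝ) + δ)) ≤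
              Kc * (1 + ‖x - x₀‖) ^ (-((n:ℝ) + δ)) := by
            calc Kd * ‖x - x₀‖ ^ (-((n:ℝ) + δ)) ≤
                Kd * ((1 + 1 / (2 * r)) ^ ((n:ℝ) + δ) *
                  (1 + ‖x - x₀‖) ^ (-((n:ℝ) + δ))) :=
                mul_le_mul_of_nonneg_left hbr hKd0
            _ = Kc * (1 + ‖x - x₀‖) ^ (-((n:ℝ) + δ)) := by rw [hKcdef]; ring
          calc ENNReal.ofReal (Kd * ‖x - x₀‖ ^ (-((n:ℝ) + δ))) * M₀ ≤
              ENNReal.ofReal (Kc * (1 + ‖x - x₀‖) ^ (-((n:ℝ) + δ))) * M₀ :=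
              mul_le_mul_left (ENNReal.ofReal_le_ofReal hre) _
          _ = (M₀ * ENNReal.ofReal Kc) *
              ENNReal.ofReal ((1 + ‖x - x₀‖) ^ (-((n:ℝ) + δ))) := by
              rw [ENNReal.ofReal_mul hKc0]; ring
    have houter2 : (∫⁻ x in B2ᶜ, ∫⁻ y, F x y) < ⊤ := by
      calc (∫⁻ x in B2ᶜ, ∫⁻ y, F x y) ≤
          ∫⁻ x in B2ᶜ, (M₀ * ENNReal.ofReal Kc) *
            ENNReal.ofReal ((1 + ‖x - x₀‖) ^ (-((n:ℝ) + δ))) :=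
          setLIntegral_mono' hB2m.compl hinner2
      _ = (M₀ * ENNReal.ofReal Kc) *
          ∫⁻ x in B2ᶜ, ENNReal.ofReal ((1 + ‖x - x₀‖) ^ (-((n:ℝ) + δ))) :=
          lintegral_const_mul' _ _ (ENNReal.mul_ne_top hM₀.ne ENNReal.ofReal_ne_top)
      _ ≤ (M₀ * ENNReal.ofReal Kc) * c₂ := by
          refine mul_le_mul_right ?_ _
          rw [← hc₂x]; exact setLIntegral_le_lintegral _ _
      _ < ⊤ := ENNReal.mul_lt_top (ENNReal.mul_lt_top hM₀ ENNReal.ofReal_lt_top) hc₂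
    rw [← lintegral_add_compl (fun x => ∫⁻ y, F x y) hB2m]
    exact ENNReal.add_lt_top.mpr ⟨houter1, houter2⟩
  have hmod : modular n s p w Set.univ = ∫⁻ x, ∫⁻ y, F x y := by
    rw [modular]
    simp only [Measure.restrict_univ]
    rfl
  constructor
  · rw [hmod]; exact hmain
  · intro Ω hΩopen hΩbdd hΩsub
    have hBm : MeasurableSet B := measurableSet_ball
    have hCP1 : (1:ℝ) ≤ max (C ^ pp) 1 := le_max_right _ _
    have hCP0 : (0:ℝ) ≤ max (C ^ pp) 1 := by linarith
    refine ⟨hwmeas, ?_, ?_⟩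
    · -- the L^{p⁻_Ω} bound
      have hx₀ : x₀ ∈ Ω := hΩsub (mem_ball_self (by linarith))
      have hne : (Set.image2 p Ω Ω).Nonempty := ⟨p x₀ x₀, mem_image2_of_mem hx₀ hx₀⟩
      have hbddb : BddBelow (Set.image2 p Ω Ω) := ⟨pm, by
        rintro b ⟨a, ha, c, hc, rfl⟩; exact pm_le a c⟩
      have hqpm : pm ≤ infOn n p Ω := by
        rw [infOn]
        apply le_csInf hne
        rintro b ⟨a, ha, c, hc, rfl⟩
        exact pm_le a c
      have hq1 : infOn n p Ω ≤ pp := by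
        rw [infOn]
        exact le_trans (csInf_le hbddb (mem_image2_of_mem hx₀ hx₀)) (p_le_pp x₀ x₀)
      have hq0 : (0:ℝ) < infOn n p Ω := lt_of_lt_of_le pm_pos hqpm
      have hptq : ∀ x : Rn n, ENNReal.ofReal (|w x| ^ infOn n p Ω) ≤
          B.indicator (fun x => ENNReal.ofReal (max (C ^ pp) 1 * (1 + |v x| ^ pp))) x := by
        intro x
        by_cases hxB : x ∈ B
        · rw [indicator_of_mem hxB]
          apply ENNReal.ofReal_le_ofReal
          calc |w x| ^ infOn n p Ω ≤ 1 + |w x| ^ pp :=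
              rpow_le_one_add_rpow (abs_nonneg _) hq0.le hq1
          _ ≤ 1 + C ^ pp * |v x| ^ pp := by
              have h1 : |w x| ^ pp ≤ (C * |v x|) ^ pp :=
                Real.rpow_le_rpow (abs_nonneg _) (hwb x) pp_pos.le
              rw [Real.mul_rpow hC0 (abs_nonneg _)] at h1; linarith
          _ ≤ max (C ^ pp) 1 * (1 + |v x| ^ pp) := by
              have h3 : C ^ pp ≤ max (C ^ pp) 1 := le_max_left _ _
              have h5 := hvpm x
              have h6 : C ^ pp * (|v x| ^ pp) ≤ max (C ^ pp) 1 * (|v x| ^ pp) :=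
                mul_le_mul_of_nonneg_right h3 h5
              have h7 : max (C ^ pp) 1 * (1 + |v x| ^ pp) =
                  max (C ^ pp) 1 + max (C ^ pp) 1 * |v x| ^ pp := by ring
              linarith
        · rw [indicator_of_notMem hxB, hw0 x hxB, abs_zero,
            Real.zero_rpow hq0.ne', ENNReal.ofReal_zero]
      calc (∫⁻ x in Ω, ENNReal.ofReal (|w x| ^ infOn n p Ω)) ≤
          ∫⁻ x in Ω, B.indicator
            (fun x => ENNReal.ofReal (max (C ^ pp) 1 * (1 + |v x| ^ pp))) x :=
          lintegral_mono hptq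
      _ ≤ ∫⁻ x, B.indicator
            (fun x => ENNReal.ofReal (max (C ^ pp) 1 * (1 + |v x| ^ pp))) x :=
          setLIntegral_le_lintegral _ _
      _ = ∫⁻ x in B, ENNReal.ofReal (max (C ^ pp) 1 * (1 + |v x| ^ pp)) :=
          lintegral_indicator hBm _
      _ ≤ ∫⁻ x in B2, ENNReal.ofReal (max (C ^ pp) 1 * (1 + |v x| ^ pp)) :=
          lintegral_mono_set hBB2
      _ = ENNReal.ofReal (max (C ^ pp) 1) * M₀ := by
          simp_rw [ENNReal.ofReal_mul hCP0]
          rw [lintegral_const_mul' _ _ ENNReal.ofReal_ne_top, hM₀def]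
      _ < ⊤ := ENNReal.mul_lt_top ENNReal.ofReal_lt_top hM₀
    · -- the cross modular bound
      have hGmeas : Measurable (fun z : Rn n × Rn n =>
          ENNReal.ofReal (|w z.1 - w z.2| ^ p z.1 z.2 /
            ‖z.1 - z.2‖ ^ ((n:ℝ) + s z.1 z.2 * p z.1 z.2))) := by
        apply ENNReal.measurable_ofReal.comp
        apply Measurable.div
        · exact ((hwmeas.comp measurable_fst).sub (hwmeas.comp measurable_snd)).abs.pow
            hsp.p_meas
        · exact ((measurable_fst.sub measurable_snd).norm).pow
            (measurable_const.add (hsp.s_meas.mul hsp.p_meas))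
      have hcross : crossModular n Ω s p w ≤ ∫⁻ x, ∫⁻ y, F x y :=
        calc crossModular n Ω s p w
            = ∫⁻ (z : Rn n × Rn n) in crossSet n Ω, ENNReal.ofReal
              (|w z.1 - w z.2| ^ p z.1 z.2 /
                ‖z.1 - z.2‖ ^ ((n:ℝ) + s z.1 z.2 * p z.1 z.2)) := rfl
        _ ≤ ∫⁻ (z : Rn n × Rn n), ENNReal.ofReal
              (|w z.1 - w z.2| ^ p z.1 z.2 /
                ‖z.1 - z.2‖ ^ ((n:ℝ) + s z.1 z.2 * p z.1 z.2)) :=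
            setLIntegral_le_lintegral _ _
        _ = ∫⁻ x, ∫⁻ y, F x y := by
            rw [Measure.volume_eq_prod, lintegral_prod _ hGmeas.aemeasurable]
      exact lt_of_le_of_lt hcross hmain
end
end

section
/- Let s, p : ℝⁿ×ℝⁿ → ℝ be symmetric measurable functions satisfying the standing bounds, and let Ω ⊂ ℝⁿ be open and bounded. (i) If v ∈ L^γ(ℝⁿ) for some γ ≥ p⁺ − 1, then v ∈ L^∞(Ω; L^{p(·,·)−1}_{s(·,·)p(·,·)}(ℝⁿ)). (ii) If v ∈ L^{p⁺−1}(B_M(0)) for some M > 0 and v is essentially bounded on ℝⁿ \ B_M(0), then v ∈ L^∞(Ω; L^{p(·,·)−1}_{s(·,·)p(·,·)}(ℝⁿ)). In particular every v ∈ L^∞(ℝⁿ) belongs to L^∞(Ω; L^{p(·,·)−1}_{s(·,·)p(·,·)}(ℝⁿ)) for every such Ω. -/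
open MeasureTheory Metric Set Real
open scoped ENNReal NNReal

noncomputable section

lemma aux_rpow_le {a t γ : ℝ} (ha : 0 ≤ a) (ht : 0 ≤ t) (htγ : t ≤ γ) :
    a ^ t ≤ 1 + a ^ γ := by
  rcases le_or_gt a 1 with h | h
  · have := Real.rpow_le_one ha h ht
    have := Real.rpow_nonneg ha γ
    linarith
  · have h1 := Real.rpow_le_rpow_of_exponent_le h.le htγ
    linarith

-- lintegral of |v|^γ finite from Memℒp
lemma aux_lint_rpow {α : Type*} [MeasurableSpace α] {μ : Measure α} (v : α → ℝ) {γ : ℝ}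
    (hγ : 0 < γ) (hint : MemLp v (ENNReal.ofReal γ) μ) :
    (∫⁻ y, ENNReal.ofReal (|v y| ^ γ) ∂μ) < ⊤ := by
  have h2 := (eLpNorm_lt_top_iff_lintegral_rpow_enorm_lt_top
    (f := v) (μ := μ) (p := ENNReal.ofReal γ)
    (by simp [ENNReal.ofReal_eq_zero, not_le, hγ]) (by simp)).1 hint.2
  rw [ENNReal.toReal_ofReal hγ.le] at h2
  have : ∀ y, ENNReal.ofReal (|v y| ^ γ) = (‖v y‖ₑ : ℝ≥0∞) ^ γ := fun y => by
    rw [Real.enorm_eq_ofReal_abs, ← ENNReal.ofReal_rpow_of_nonneg (abs_nonneg _) hγ.le]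
  simpa [this] using h2

-- case (ii) master integral
lemma aux_caseii (n : ℕ) (v : Rn n → ℝ) (hv : Measurable v) {γ r M : ℝ}
    (hγ : 0 < γ) (hr : (n:ℝ) < r) (hM : 0 < M)
    (h1 : MemLp v (ENNReal.ofReal γ) (volume.restrict (ball (0 : Rn n) M)))
    (h2 : eLpNorm v ⊤ (volume.restrict (ball (0 : Rn n) M)ᶜ) < ⊤) :
    (∫⁻ y, ENNReal.ofReal ((1 + |v y| ^ γ) / (1 + ‖y‖) ^ r)) < ⊤ := by
  have hr0 : (0:ℝ) ≤ r := le_trans (Nat.cast_nonneg n) hr.le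
  have hb : ∀ y : Rn n, (1:ℝ) ≤ 1 + ‖y‖ := fun y => le_add_of_nonneg_right (norm_nonneg y)
  have hbr : ∀ y : Rn n, (1:ℝ) ≤ (1 + ‖y‖) ^ r := fun y => Real.one_le_rpow (hb y) hr0
  rw [← lintegral_add_compl (μ := volume) _ (measurableSet_ball (x := (0 : Rn n)) (ε := M))]
  refine ENNReal.add_lt_top.2 ⟨?_, ?_⟩
  · -- inside the ball
    calc (∫⁻ y in ball (0 : Rn n) M, ENNReal.ofReal ((1 + |v y| ^ γ) / (1 + ‖y‖) ^ r))
        ≤ ∫⁻ y in ball (0 : Rn n) M, (1 + ENNReal.ofReal (|v y| ^ γ)) := by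
          refine lintegral_mono fun y => ?_
          have hd : (1 + |v y| ^ γ) / (1 + ‖y‖) ^ r ≤ 1 + |v y| ^ γ :=
            div_le_self (by positivity) (hbr y)
          refine le_trans (ENNReal.ofReal_le_ofReal hd) ?_
          rw [ENNReal.ofReal_add one_pos.le (Real.rpow_nonneg (abs_nonneg _) _),
            ENNReal.ofReal_one]
      _ = volume (ball (0 : Rn n) M) + ∫⁻ y in ball (0 : Rn n) M, ENNReal.ofReal (|v y| ^ γ) := by
          rw [lintegral_add_left measurable_const]
          simp
      _ < ⊤ := ENNReal.add_lt_top.2 ⟨measure_ball_lt_top, aux_lint_rpow v hγ h1⟩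
  · -- outside the ball
    set μ' := volume.restrict (ball (0 : Rn n) M)ᶜ
    set C : ℝ := (eLpNorm v ⊤ μ').toReal with hC
    have hC0 : 0 ≤ C := ENNReal.toReal_nonneg
    have hae : ∀ᵐ y ∂μ', |v y| ≤ C := by
      have := ae_le_eLpNormEssSup (f := v) (μ := μ')
      filter_upwards [this] with y hy
      have : ((‖v y‖₊ : ℝ≥0∞)).toReal ≤ (eLpNormEssSup v μ').toReal := by
        apply ENNReal.toReal_mono _ hy
        rw [← eLpNorm_exponent_top]; exact h2.ne
      simpa [hC, eLpNorm_exponent_top, Real.norm_eq_abs] using this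
    calc (∫⁻ y in (ball (0 : Rn n) M)ᶜ, ENNReal.ofReal ((1 + |v y| ^ γ) / (1 + ‖y‖) ^ r))
        ≤ ∫⁻ y in (ball (0 : Rn n) M)ᶜ,
            ENNReal.ofReal (1 + C ^ γ) * ENNReal.ofReal ((1 + ‖y‖) ^ (-r)) := by
          refine lintegral_mono_ae ?_
          filter_upwards [hae] with y hy
          rw [← ENNReal.ofReal_mul (by positivity)]
          apply ENNReal.ofReal_le_ofReal
          have hnum : 1 + |v y| ^ γ ≤ 1 + C ^ γ := by
            have := Real.rpow_le_rpow (abs_nonneg _) hy hγ.le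
            linarith
          have hden : (0:ℝ) < (1 + ‖y‖) ^ r := by positivity
          calc (1 + |v y| ^ γ) / (1 + ‖y‖) ^ r ≤ (1 + C ^ γ) / (1 + ‖y‖) ^ r :=
              div_le_div_of_nonneg_right hnum hden.le
            _ = (1 + C ^ γ) * (1 + ‖y‖) ^ (-r) := by
              rw [Real.rpow_neg (by positivity), div_eq_mul_inv]
      _ = ENNReal.ofReal (1 + C ^ γ) * ∫⁻ y in (ball (0 : Rn n) M)ᶜ,
            ENNReal.ofReal ((1 + ‖y‖) ^ (-r)) := lintegral_const_mul _ (by fun_prop)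
      _ ≤ ENNReal.ofReal (1 + C ^ γ) * ∫⁻ y, ENNReal.ofReal ((1 + ‖y‖) ^ (-r)) :=
          mul_le_mul_right (setLIntegral_le_lintegral _ _) _
      _ < ⊤ := ENNReal.mul_lt_top ENNReal.ofReal_lt_top
          (finite_integral_one_add_norm (E := Rn n) (by simpa using hr))

lemma aux_casei (n : ℕ) (v : Rn n → ℝ) {γ r : ℝ} (hγ : 0 < γ)
    (hint : MemLp v (ENNReal.ofReal γ) (volume : Measure (Rn n))) (hr : (n:ℝ) < r) :
    (∫⁻ y, ENNReal.ofReal ((1 + |v y| ^ γ) / (1 + ‖y‖) ^ r)) < ⊤ := by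
  have hb : ∀ y : Rn n, (1:ℝ) ≤ 1 + ‖y‖ := fun y => le_add_of_nonneg_right (norm_nonneg y)
  have hbr : ∀ y : Rn n, (1:ℝ) ≤ (1 + ‖y‖) ^ r := fun y =>
    Real.one_le_rpow (hb y) (le_trans (Nat.cast_nonneg n) hr.le)
  have hle : ∀ y : Rn n, ENNReal.ofReal ((1 + |v y| ^ γ) / (1 + ‖y‖) ^ r) ≤
      ENNReal.ofReal ((1 + ‖y‖) ^ (-r)) + ENNReal.ofReal (|v y| ^ γ) := by
    intro y
    have h1 : (1 + |v y| ^ γ) / (1 + ‖y‖) ^ r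
        = 1 / (1 + ‖y‖) ^ r + |v y| ^ γ / (1 + ‖y‖) ^ r := by ring
    rw [h1]
    refine le_trans (ENNReal.ofReal_add_le) (add_le_add ?_ ?_)
    · rw [Real.rpow_neg (by positivity), one_div]
    · exact ENNReal.ofReal_le_ofReal (div_le_self (by positivity) (hbr y))
  calc (∫⁻ y, ENNReal.ofReal ((1 + |v y| ^ γ) / (1 + ‖y‖) ^ r))
      ≤ ∫⁻ y, (ENNReal.ofReal ((1 + ‖y‖) ^ (-r)) + ENNReal.ofReal (|v y| ^ γ)) :=
        lintegral_mono hle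
    _ = (∫⁻ y : Rn n, ENNReal.ofReal ((1 + ‖y‖) ^ (-r))) + ∫⁻ y, ENNReal.ofReal (|v y| ^ γ) := by
        apply lintegral_add_left; fun_prop
    _ < ⊤ := ENNReal.add_lt_top.2
        ⟨finite_integral_one_add_norm (E := Rn n) (by simpa using hr), aux_lint_rpow v hγ hint⟩

lemma tail_master {n : ℕ} {Ω : Set (Rn n)} {s p : Rn n → Rn n → ℝ} {sm sps pm pp : ℝ}
    (hsp : StandingSP n s p sm sps pm pp) {v : Rn n → ℝ} (hv : Measurable v) {γ : ℝ}
    (hγ : pp - 1 ≤ γ)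
    (hM : (∫⁻ y, ENNReal.ofReal ((1 + |v y| ^ γ) / (1 + ‖y‖) ^ ((n:ℝ) + sm * pm))) < ⊤) :
    MemTail n Ω s p v := by
  refine ⟨hv, lt_of_le_of_lt ?_ hM⟩
  unfold tailSemi
  refine essSup_le_of_ae_le _ ?_
  refine Filter.Eventually.of_forall fun x => ?_
  refine lintegral_mono fun y => ?_
  apply ENNReal.ofReal_le_ofReal
  have hb : (1:ℝ) ≤ 1 + ‖y‖ := le_add_of_nonneg_right (norm_nonneg y)
  obtain ⟨hs1, hs2⟩ := hsp.s_bounds x y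
  obtain ⟨hp1, hp2⟩ := hsp.p_bounds x y
  have hpm := hsp.pm_gt_one
  have hsm := hsp.sm_pos
  have he : (n:ℝ) + sm * pm ≤ (n:ℝ) + s x y * p x y := by
    have : sm * pm ≤ s x y * p x y := mul_le_mul hs1 hp1 (by linarith) (by linarith)
    linarith
  exact div_le_div₀ (by positivity) (aux_rpow_le (abs_nonneg _) (by linarith) (by linarith))
    (Real.rpow_pos_of_pos (by linarith) _)
    (Real.rpow_le_rpow_of_exponent_le hb he)

/-- **Remark `rmkL` (examples of tail-space functions).** (i) `v ∈ L^γ(ℝⁿ)` with `γ ≥ p⁺−1`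
lies in the tail space; (ii) `v ∈ L^{p⁺−1}(B_M(0))` that is essentially bounded outside
`B_M(0)` lies in the tail space; in particular every essentially bounded `v` does. -/
theorem tail_space_examples
    (n : ℕ) (Ω : Set (Rn n)) (hΩo : IsOpen Ω) (hΩb : Bornology.IsBounded Ω)
    (s p : Rn n → Rn n → ℝ) (sm sps pm pp : ℝ)
    (hsp : StandingSP n s p sm sps pm pp) :
    (∀ (v : Rn n → ℝ) (γ : ℝ), Measurable v → pp - 1 ≤ γ →
      MemLp v (ENNReal.ofReal γ) (volume : Measure (Rn n)) → MemTail n Ω s p v) ∧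
    (∀ (v : Rn n → ℝ) (M : ℝ), Measurable v → 0 < M →
      MemLp v (ENNReal.ofReal (pp - 1)) (volume.restrict (ball (0 : Rn n) M)) →
      eLpNorm v ⊤ (volume.restrict (ball (0 : Rn n) M)ᶜ) < ⊤ → MemTail n Ω s p v) ∧
    (∀ v : Rn n → ℝ, Measurable v → eLpNorm v ⊤ (volume : Measure (Rn n)) < ⊤ →
      MemTail n Ω s p v) := by
  obtain ⟨hp1, hp2⟩ := hsp.p_bounds 0 0
  have hpm := hsp.pm_gt_one
  have hsm := hsp.sm_pos
  have hpp1 : (0:ℝ) < pp - 1 := by linarith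
  have hr : (n:ℝ) < (n:ℝ) + sm * pm := by nlinarith
  refine ⟨?_, ?_, ?_⟩
  · intro v γ hv hγ hmem
    exact tail_master hsp hv hγ (aux_casei n v (by linarith) hmem hr)
  · intro v M hv hM h1 h2
    exact tail_master hsp hv le_rfl (aux_caseii n v hv hpp1 hr hM h1 h2)
  · intro v hv hbd
    haveI : IsFiniteMeasure (volume.restrict (ball (0 : Rn n) 1)) :=
      ⟨by simpa [Measure.restrict_apply_univ] using measure_ball_lt_top⟩
    have htop : MemLp v ⊤ (volume.restrict (ball (0 : Rn n) 1)) :=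
      ⟨hv.aestronglyMeasurable,
        lt_of_le_of_lt (eLpNorm_mono_measure _ Measure.restrict_le_self) hbd⟩
    have h1 : MemLp v (ENNReal.ofReal (pp - 1)) (volume.restrict (ball (0 : Rn n) 1)) :=
      htop.mono_exponent le_top
    have h2 : eLpNorm v ⊤ (volume.restrict (ball (0 : Rn n) 1)ᶜ) < ⊤ :=
      lt_of_le_of_lt (eLpNorm_mono_measure _ Measure.restrict_le_self) hbd
    exact tail_master hsp hv le_rfl (aux_caseii n v hv hpp1 hr one_pos h1 h2)
end
end
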